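/- arXiv:2512.02878 — 5 statements merged into one kernel-verified Lean document; each statement's English description precedes it below -/
import Mathlib

section
/- Under the stated setting, the weak law of large numbers with plugged-in estimator holds: (1/n) ∑_{i=1}^n G(θ̂_n, X_i) converges in probability to E[G(θ₀, X_1)] as n → ∞. -/
open MeasureTheory ProbabilityTheory Filter Topology Set

/-- Weak law of large numbers with a plugged-in estimator: if `θ̂ n → θ₀` in
probability, the `X i` are i.i.d. with values in `[0, tmax]` and independent of the estimator
sequence, and `G : Θ × [0,∞) → [0,∞)` is jointly continuous, monotone in its second argument and
uniformly bounded, then `(1/n) ∑_{i<n} G (θ̂ n) (X i)` converges in probability to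
`E[G θ₀ X₁]`. -/
theorem stmt2 {q : ℕ} (Θ : Set (Fin q → ℝ)) (θ₀ : Fin q → ℝ)
    (hΘnhds : Θ ∈ 𝓝 θ₀)
    {Ω : Type*} [MeasurableSpace Ω] (P : Measure Ω) [IsProbabilityMeasure P]
    (θhat : ℕ → Ω → (Fin q → ℝ)) (X : ℕ → Ω → ℝ)
    (hθhatΘ : ∀ n ω, θhat n ω ∈ Θ)
    (hθhatProb : TendstoInMeasure P θhat atTop (fun _ => θ₀))
    (hXmeas : ∀ i, Measurable (X i))
    (hXiid : iIndepFun X P)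
    (hXident : ∀ i, P.map (X i) = P.map (X 0))
    (tmax : ℝ) (htmax : 0 < tmax)
    (hXrange : ∀ i ω, X i ω ∈ Icc 0 tmax)
    (hindep : IndepFun (fun ω => fun i => X i ω) (fun ω => fun m => θhat m ω) P)
    (G : (Fin q → ℝ) → ℝ → ℝ)
    (hGcont : ContinuousOn (fun p : (Fin q → ℝ) × ℝ => G p.1 p.2) (Θ ×ˢ Ici 0))
    (hGmono : ∀ θ ∈ Θ, MonotoneOn (G θ) (Ici 0) ∨ AntitoneOn (G θ) (Ici 0))
    (hGnonneg : ∀ θ ∈ Θ, ∀ s ∈ Ici (0 : ℝ), 0 ≤ G θ s)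
    (C : ℝ) (hC : 0 < C)
    (hGbdd : ∀ θ ∈ Θ, ∀ s ∈ Icc 0 tmax, G θ s ≤ C) :
    TendstoInMeasure P
      (fun (n : ℕ) ω => (n : ℝ)⁻¹ * ∑ i ∈ Finset.range n, G (θhat n ω) (X i ω))
      atTop (fun _ => ∫ ω, G θ₀ (X 0 ω) ∂P) := by
  classical
  have hθ₀Θ : θ₀ ∈ Θ := mem_of_mem_nhds hΘnhds
  -- radius r with closedBall θ₀ r ⊆ Θ
  obtain ⟨r, hr, hball⟩ := Metric.nhds_basis_closedBall.mem_iff.mp hΘnhds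
  -- truncation map
  set proj : ℝ → ℝ := fun s => max 0 (min s tmax) with hproj
  have hprojIcc : ∀ s, proj s ∈ Icc (0:ℝ) tmax := by
    intro s
    refine ⟨le_max_left _ _, max_le ?_ (min_le_right _ _)⟩
    exact htmax.le
  have hprojcont : Continuous proj :=
    continuous_const.max (continuous_id.min continuous_const)
  have hprojX : ∀ i ω, proj (X i ω) = X i ω := by
    intro i ω
    obtain ⟨h1, h2⟩ := hXrange i ω
    simp [hproj, min_eq_left h2, max_eq_right h1]
  -- g : truncated G θ₀, continuous everywhere
  set g : ℝ → ℝ := fun s => G θ₀ (proj s) with hg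
  have hGθ₀cont : ContinuousOn (G θ₀) (Ici 0) := by
    have : ContinuousOn (fun s : ℝ => (fun p : (Fin q → ℝ) × ℝ => G p.1 p.2) (θ₀, s)) (Ici 0) :=
      hGcont.comp (Continuous.continuousOn (by continuity))
        (fun s hs => ⟨hθ₀Θ, hs⟩)
    exact this
  have hgcont : Continuous g :=
    hGθ₀cont.comp_continuous hprojcont (fun s => (hprojIcc s).1)
  have hgmeas : Measurable g := hgcont.measurable
  have hgbdd : ∀ s, ‖g s‖ ≤ C := by
    intro s
    rw [Real.norm_eq_abs, abs_le]
    constructor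
    · linarith [hGnonneg θ₀ hθ₀Θ (proj s) (hprojIcc s).1]
    · exact hGbdd θ₀ hθ₀Θ (proj s) (hprojIcc s)
  -- the sequence Y i = g ∘ X i
  set Y : ℕ → Ω → ℝ := fun i ω => g (X i ω) with hY
  have hYmeas : ∀ i, Measurable (Y i) := fun i => hgmeas.comp (hXmeas i)
  have hYeq : ∀ i ω, Y i ω = G θ₀ (X i ω) := by
    intro i ω; simp [hY, hg, hprojX i ω]
  have hYint : Integrable (Y 0) P :=
    ⟨(hYmeas 0).aestronglyMeasurable,
      HasFiniteIntegral.of_bounded (ae_of_all _ fun ω => hgbdd (X 0 ω))⟩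
  have hYindep : Pairwise (Function.onFun (IndepFun · · P) Y) := by
    intro i j hij
    exact (hXiid.indepFun hij).comp hgmeas hgmeas
  have hYident : ∀ i, IdentDistrib (Y i) (Y 0) P P := by
    intro i
    exact (⟨(hXmeas i).aemeasurable, (hXmeas 0).aemeasurable, hXident i⟩ :
      IdentDistrib (X i) (X 0) P P).comp hgmeas
  -- strong law for Y
  have hSLLN := strong_law_ae_real Y hYint hYindep hYident
  have hEeq : (∫ ω, Y 0 ω ∂P) = ∫ ω, G θ₀ (X 0 ω) ∂P := by
    apply integral_congr_ae; filter_upwards with ω; exact hYeq 0 ω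
  set E : ℝ := ∫ ω, G θ₀ (X 0 ω) ∂P with hE
  set B : ℕ → Ω → ℝ := fun n ω => (n : ℝ)⁻¹ * ∑ i ∈ Finset.range n, Y i ω with hB
  have hBae : ∀ᵐ ω ∂P, Tendsto (fun n => B n ω) atTop (𝓝 E) := by
    filter_upwards [hSLLN] with ω hω
    have : (fun n : ℕ => (∑ i ∈ Finset.range n, Y i ω) / n) = fun n => B n ω := by
      funext n; rw [div_eq_inv_mul]
    rw [this] at hω
    rwa [hEeq] at hω
  have hBmeas : ∀ n, AEStronglyMeasurable (B n) P := by
    intro n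
    exact ((Finset.measurable_sum _ (fun i _ => hYmeas i)).const_mul _).aestronglyMeasurable
  have hBtend : TendstoInMeasure P B atTop (fun _ => E) :=
    tendstoInMeasure_of_tendsto_ae hBmeas hBae
  -- uniform continuity on compact set
  have hKcomp : IsCompact ((Metric.closedBall θ₀ r ×ˢ Icc (0:ℝ) tmax)) :=
    (isCompact_closedBall θ₀ r).prod isCompact_Icc
  have hKsub : (Metric.closedBall θ₀ r ×ˢ Icc (0:ℝ) tmax) ⊆ Θ ×ˢ Ici 0 := by
    rintro ⟨θ, s⟩ ⟨h1, h2⟩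
    exact ⟨hball h1, h2.1⟩
  have hGuc : UniformContinuousOn (fun p : (Fin q → ℝ) × ℝ => G p.1 p.2)
      (Metric.closedBall θ₀ r ×ˢ Icc (0:ℝ) tmax) :=
    hKcomp.uniformContinuousOn_of_continuous (hGcont.mono hKsub)
  rw [Metric.uniformContinuousOn_iff] at hGuc
  -- main argument
  rw [tendstoInMeasure_iff_dist]
  intro ε hε
  obtain ⟨δ₀, hδ₀, hδ⟩ := hGuc (ε / 4) (by linarith)
  set δ : ℝ := min δ₀ r with hδdef
  have hδpos : 0 < δ := lt_min hδ₀ hr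
  -- key pointwise bound
  have hkey : ∀ n ω, dist (θhat n ω) θ₀ < δ →
      |(n : ℝ)⁻¹ * ∑ i ∈ Finset.range n, G (θhat n ω) (X i ω) - B n ω| ≤ ε / 4 := by
    intro n ω hd
    have hsub : (n : ℝ)⁻¹ * ∑ i ∈ Finset.range n, G (θhat n ω) (X i ω) - B n ω
        = (n : ℝ)⁻¹ * ∑ i ∈ Finset.range n, (G (θhat n ω) (X i ω) - Y i ω) := by
      rw [Finset.sum_sub_distrib, mul_sub, hB]
    rw [hsub]
    have hterm : ∀ i ∈ Finset.range n, |G (θhat n ω) (X i ω) - Y i ω| ≤ ε / 4 := by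
      intro i _
      rw [hYeq i ω]
      have hmem1 : ((θhat n ω, X i ω) : (Fin q → ℝ) × ℝ) ∈
          Metric.closedBall θ₀ r ×ˢ Icc (0:ℝ) tmax := by
        refine ⟨Metric.mem_closedBall.mpr ?_, hXrange i ω⟩
        exact le_of_lt (lt_of_lt_of_le hd (min_le_right _ _))
      have hmem2 : ((θ₀, X i ω) : (Fin q → ℝ) × ℝ) ∈
          Metric.closedBall θ₀ r ×ˢ Icc (0:ℝ) tmax :=
        ⟨Metric.mem_closedBall_self hr.le, hXrange i ω⟩
      have hdp : dist ((θhat n ω, X i ω) : (Fin q → ℝ) × ℝ) (θ₀, X i ω) < δ₀ := by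
        rw [Prod.dist_eq]
        simp only [dist_self]
        rw [max_eq_left dist_nonneg]
        exact lt_of_lt_of_le hd (min_le_left _ _)
      have := hδ _ hmem1 _ hmem2 hdp
      rw [Real.dist_eq] at this
      exact this.le
    calc |(n : ℝ)⁻¹ * ∑ i ∈ Finset.range n, (G (θhat n ω) (X i ω) - Y i ω)|
        ≤ (n : ℝ)⁻¹ * ∑ i ∈ Finset.range n, |G (θhat n ω) (X i ω) - Y i ω| := by
          rw [abs_mul, abs_of_nonneg (by positivity : (0:ℝ) ≤ (n:ℝ)⁻¹)]
          exact mul_le_mul_of_nonneg_left (Finset.abs_sum_le_sum_abs _ _) (by positivity)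
      _ ≤ (n : ℝ)⁻¹ * (n * (ε / 4)) := by
          refine mul_le_mul_of_nonneg_left ?_ (by positivity)
          calc ∑ i ∈ Finset.range n, |G (θhat n ω) (X i ω) - Y i ω|
              ≤ ∑ _i ∈ Finset.range n, (ε / 4) := Finset.sum_le_sum hterm
            _ = n * (ε / 4) := by simp [Finset.sum_const, mul_comm]
      _ ≤ ε / 4 := by
          rcases Nat.eq_zero_or_pos n with h0 | hpos
          · simp [h0]; positivity
          · have : (n : ℝ)⁻¹ * (n * (ε / 4)) = ε / 4 := by
              field_simp
            rw [this]
    -- set inclusion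
  have hincl : ∀ n : ℕ, {ω | ε ≤ dist ((n : ℝ)⁻¹ * ∑ i ∈ Finset.range n, G (θhat n ω) (X i ω)) E}
      ⊆ {ω | δ ≤ dist (θhat n ω) θ₀} ∪ {ω | ε / 2 ≤ dist (B n ω) E} := by
    intro n ω hω
    simp only [Set.mem_setOf_eq] at hω
    by_contra hcon
    simp only [Set.mem_union, Set.mem_setOf_eq, not_or, not_le] at hcon
    obtain ⟨h1, h2⟩ := hcon
    have hk := hkey n ω h1
    have : dist ((n : ℝ)⁻¹ * ∑ i ∈ Finset.range n, G (θhat n ω) (X i ω)) E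
        ≤ |(n : ℝ)⁻¹ * ∑ i ∈ Finset.range n, G (θhat n ω) (X i ω) - B n ω| + dist (B n ω) E := by
      rw [Real.dist_eq]
      have := abs_sub_abs_le_abs_sub ((n : ℝ)⁻¹ * ∑ i ∈ Finset.range n, G (θhat n ω) (X i ω) - E) 0
      calc |(n : ℝ)⁻¹ * ∑ i ∈ Finset.range n, G (θhat n ω) (X i ω) - E|
          = |((n : ℝ)⁻¹ * ∑ i ∈ Finset.range n, G (θhat n ω) (X i ω) - B n ω) + (B n ω - E)| := by
            ring_nf
        _ ≤ _ := by
            refine (abs_add_le _ _).trans ?_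
            rw [Real.dist_eq]
    linarith
  -- conclusion by squeeze
  have h1tend : Tendsto (fun n => P {ω | δ ≤ dist (θhat n ω) θ₀}) atTop (𝓝 0) :=
    tendstoInMeasure_iff_dist.mp hθhatProb δ hδpos
  have h2tend : Tendsto (fun n => P {ω | ε / 2 ≤ dist (B n ω) E}) atTop (𝓝 0) :=
    tendstoInMeasure_iff_dist.mp hBtend (ε / 2) (by linarith)
  have hsum : Tendsto (fun n => P {ω | δ ≤ dist (θhat n ω) θ₀}
      + P {ω | ε / 2 ≤ dist (B n ω) E}) atTop (𝓝 0) := by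
    have := h1tend.add h2tend
    simpa using this
  refine tendsto_of_tendsto_of_tendsto_of_le_of_le tendsto_const_nhds hsum
    (fun n => zero_le) (fun n => ?_)
  calc P {ω | ε ≤ dist ((n : ℝ)⁻¹ * ∑ i ∈ Finset.range n, G (θhat n ω) (X i ω)) E}
      ≤ P ({ω | δ ≤ dist (θhat n ω) θ₀} ∪ {ω | ε / 2 ≤ dist (B n ω) E}) :=
        measure_mono (hincl n)
    _ ≤ _ := measure_union_le _ _
end

section
/- Fix t ∈ (0, t_max]. Under the survival model, the estimator assumption that θ̂^{(m)} → θ_A in probability with (θ̂^{(m)}) independent of the group-B data, and the asymptotic regime, the mean accumulated hazard (1/n_B(k)) ∑_{i=1}^{n_B(k)} Λ(θ̂_A, min(t, X_{B,i})) converges in probability, as k → ∞, to V₁(t) = E[Λ(θ_A, min(t, X_{B,1}))] = P[T_{B,1} ≤ min(C_{B,1}, t)]. -/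
open MeasureTheory ProbabilityTheory Filter Topology Set


lemma hazard_integral_eq (G : ℝ → ℝ)
    (hGc : ContinuousOn G (Ici 0)) (hG0 : G 0 = 0)
    (hGm : MonotoneOn G (Ici 0))
    (ν : Measure ℝ) [IsProbabilityMeasure ν]
    (hsurv : ∀ s ∈ Ici (0:ℝ), ν (Ioi s) = ENNReal.ofReal (Real.exp (-(G s))))
    (u : ℝ) (hu : 0 ≤ u) :
    ∫ x, G (min (max x 0) u) ∂ν = (ν (Iic u)).toReal := by
  have hGnn : ∀ s ∈ Ici (0:ℝ), 0 ≤ G s := fun s hs => hG0 ▸ hGm self_mem_Ici hs hs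
  set h : ℝ → ℝ := fun a => min (max a 0) u with hh
  have hmem : ∀ a, h a ∈ Icc 0 u := fun a =>
    ⟨le_min (le_max_right _ _) hu, min_le_right _ _⟩
  have hcont : Continuous h := (continuous_id.max continuous_const).min continuous_const
  have hfc : Continuous (fun a => G (h a)) :=
    hGc.comp_continuous hcont (fun a => (hmem a).1)
  have hfnn : ∀ a, 0 ≤ G (h a) := fun a => hGnn _ (hmem a).1
  have hfle : ∀ a, G (h a) ≤ G u := fun a => hGm (hmem a).1 hu (hmem a).2
  have hGu : 0 ≤ G u := hGnn u hu
  have hint : Integrable (fun a => G (h a)) ν := by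
    refine Integrable.mono' (integrable_const (G u)) hfc.aestronglyMeasurable ?_
    filter_upwards with a
    rw [Real.norm_of_nonneg (hfnn a)]
    exact hfle a
  rw [hint.integral_eq_integral_meas_lt (Filter.Eventually.of_forall hfnn)]
  -- compute the measure of the superlevel sets
  have hmeasval : ∀ x ∈ Ioi (0:ℝ),
      (ν {a : ℝ | x < G (h a)}).toReal
        = (Ioo (0:ℝ) (G u)).indicator (fun x => Real.exp (-x)) x := by
    intro x hx
    rw [mem_Ioi] at hx
    by_cases hxGu : x < G u
    · -- the interesting case
      set A : Set ℝ := Icc 0 u ∩ G ⁻¹' (Iic x) with hA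
      have hAne : A.Nonempty := ⟨0, ⟨le_refl 0, hu⟩, by simp [hG0, hx.le]⟩
      have hAbdd : BddAbove A := BddAbove.mono inter_subset_left bddAbove_Icc
      have hAclosed : IsClosed A :=
        (hGc.mono (Icc_subset_Ici_self)).preimage_isClosed_of_isClosed isClosed_Icc isClosed_Iic
      set s : ℝ := sSup A with hs
      have hsA : s ∈ A := hAclosed.csSup_mem hAne hAbdd
      have hs0 : 0 ≤ s := hsA.1.1
      have hsu : s ≤ u := hsA.1.2
      have hGsx : G s ≤ x := hsA.2
      have hsltu : s < u := hsu.lt_of_ne (by intro h; rw [h] at hGsx; exact absurd hGsx (not_le.2 hxGu))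
      -- intermediate value: G s = x
      have hGsx' : G s = x := by
        have := intermediate_value_Icc hu (hGc.mono Icc_subset_Ici_self)
        obtain ⟨y, hy, hGy⟩ := this ⟨by rw [hG0]; exact hx.le, hxGu.le⟩
        have hyA : y ∈ A := ⟨hy, by simp [hGy]⟩
        have : G y ≤ G s := hGm hy.1 hs0 (le_csSup hAbdd hyA)
        exact le_antisymm hGsx (hGy ▸ this)
      have hset : {a : ℝ | x < G (h a)} = Ioi s := by
        ext a
        simp only [mem_setOf_eq, mem_Ioi]
        constructor
        · intro hxa
          by_contra hc
          push_neg at hc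
          have : h a ≤ s := le_trans (min_le_left _ _) (max_le hc hs0)
          have : G (h a) ≤ G s := hGm (hmem a).1 hs0 this
          exact absurd hxa (not_lt.2 (this.trans hGsx))
        · intro hsa
          have ha0 : 0 < a := lt_of_le_of_lt hs0 hsa
          have hha : h a = min a u := by rw [hh]; simp [max_eq_left ha0.le]
          rcases le_or_gt u a with hua | hau
          · rw [hha, min_eq_right hua]; exact hxGu
          · rw [hha, min_eq_left hau.le]
            by_contra hc
            push_neg at hc
            have : a ∈ A := ⟨⟨ha0.le, hau.le⟩, hc⟩
            exact absurd (le_csSup hAbdd this) (not_le.2 hsa)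
      rw [hset, hsurv s hs0, hGsx', indicator_of_mem (mem_Ioo.2 ⟨hx, hxGu⟩),
        ENNReal.toReal_ofReal (Real.exp_nonneg _)]
    · -- x ≥ G u : the set is empty
      push_neg at hxGu
      have hset : {a : ℝ | x < G (h a)} = ∅ := by
        ext a; simp only [mem_setOf_eq, mem_empty_iff_false, iff_false, not_lt]
        exact (hfle a).trans hxGu
      rw [hset]
      rw [indicator_of_notMem (by simp [not_lt.2 hxGu] : x ∉ Ioo (0:ℝ) (G u))]
      simp
  change ∫ x in Ioi (0:ℝ), (ν {a : ℝ | x < G (h a)}).toReal = _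
  rw [setIntegral_congr_fun measurableSet_Ioi hmeasval]
  rw [integral_indicator measurableSet_Ioo, Measure.restrict_restrict measurableSet_Ioo,
    (by rw [Ioo_inter_Ioi]; simp [hGu] : Ioo (0:ℝ) (G u) ∩ Ioi 0 = Ioo 0 (G u))]
  have hIoo : ∫ x in Ioo (0:ℝ) (G u), Real.exp (-x) = 1 - Real.exp (-(G u)) := by
    rw [← integral_Ioc_eq_integral_Ioo, ← intervalIntegral.integral_of_le hGu,
      intervalIntegral.integral_comp_neg Real.exp, integral_exp]
    simp
  rw [hIoo]
  have hIic : ν (Iic u) = 1 - ENNReal.ofReal (Real.exp (-(G u))) := by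
    have : Iic u = (Ioi u)ᶜ := by simp
    rw [this, measure_compl measurableSet_Ioi (measure_ne_top _ _), hsurv u hu,
      measure_univ]
  rw [hIic, ENNReal.toReal_sub_of_le (ENNReal.ofReal_le_one.2 (by
    rw [Real.exp_le_one_iff]; linarith)) (by simp)]
  simp [ENNReal.toReal_ofReal (Real.exp_nonneg _)]

lemma hazard_expectation {Ω : Type*} [MeasurableSpace Ω] (G : ℝ → ℝ)
    (hGc : ContinuousOn G (Ici 0)) (hG0 : G 0 = 0)
    (hGm : MonotoneOn G (Ici 0))
    (P : Measure Ω) [IsProbabilityMeasure P]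
    (T C : Ω → ℝ) (hT : Measurable T) (hC : Measurable C)
    (hTnn : ∀ ω, 0 ≤ T ω) (hCnn : ∀ ω, 0 ≤ C ω)
    (hTC : ProbabilityTheory.IndepFun T C P)
    (hsurv : ∀ s ∈ Ici (0:ℝ), P {ω | s < T ω} = ENNReal.ofReal (Real.exp (-(G s))))
    (t : ℝ) (ht : 0 < t) :
    ∫ ω, G (min t (min (T ω) (C ω))) ∂P = (P {ω | T ω ≤ min (C ω) t}).toReal := by
  set μT := P.map T with hμT
  set μC := P.map C with hμC
  have : IsProbabilityMeasure μT := Measure.isProbabilityMeasure_map hT.aemeasurable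
  have : IsProbabilityMeasure μC := Measure.isProbabilityMeasure_map hC.aemeasurable
  have hsurvT : ∀ s ∈ Ici (0:ℝ), μT (Ioi s) = ENNReal.ofReal (Real.exp (-(G s))) := by
    intro s hs
    rw [hμT, Measure.map_apply hT measurableSet_Ioi]
    exact hsurv s hs
  have key : ∀ u : ℝ, 0 ≤ u →
      ∫ x, G (min (max x 0) u) ∂μT = (μT (Iic u)).toReal :=
    fun u hu => hazard_integral_eq G hGc hG0 hGm μT hsurvT u hu
  have hρ : P.map (fun ω => (C ω, T ω)) = μC.prod μT :=
    (ProbabilityTheory.indepFun_iff_map_prod_eq_prod_map_map hC.aemeasurable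
      hT.aemeasurable).1 hTC.symm
  -- the clamped integrand
  set g : ℝ × ℝ → ℝ := fun p => G (min (max p.2 0) (min (max p.1 0) t)) with hg
  have hmemg : ∀ p : ℝ × ℝ, min (max p.2 0) (min (max p.1 0) t) ∈ Icc 0 t := fun p =>
    ⟨le_min (le_max_right _ _) (le_min (le_max_right _ _) ht.le),
     le_trans (min_le_right _ _) (min_le_right _ _)⟩
  have hgc : Continuous g := by
    apply hGc.comp_continuous
    · exact ((continuous_snd.max continuous_const).min
        ((continuous_fst.max continuous_const).min continuous_const))
    · exact fun p => (hmemg p).1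
  have hGnn : ∀ s ∈ Ici (0:ℝ), 0 ≤ G s := fun s hs => hG0 ▸ hGm self_mem_Ici hs hs
  have hgnn : ∀ p, 0 ≤ g p := fun p => hGnn _ (hmemg p).1
  have hgle : ∀ p, g p ≤ G t := fun p => hGm (hmemg p).1 ht.le (hmemg p).2
  have hgint : Integrable g (μC.prod μT) := by
    refine Integrable.mono' (integrable_const (G t)) hgc.aestronglyMeasurable ?_
    filter_upwards with p
    rw [Real.norm_of_nonneg (hgnn p)]
    exact hgle p
  have hLHS : ∫ ω, G (min t (min (T ω) (C ω))) ∂P = ∫ p, g p ∂(μC.prod μT) := by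
    rw [← hρ, integral_map (hC.prodMk hT).aemeasurable hgc.aestronglyMeasurable]
    congr 1
    ext ω
    rw [hg]
    simp only [max_eq_left (hTnn ω), max_eq_left (hCnn ω)]
    rw [min_comm t (min (T ω) (C ω)), min_assoc]
  rw [hLHS, MeasureTheory.integral_prod g hgint]
  have hinner : ∀ c : ℝ, ∫ x, g (c, x) ∂μT
      = (μT (Iic (min (max c 0) t))).toReal := fun c =>
    key (min (max c 0) t) (le_min (le_max_right _ _) ht.le)
  simp_rw [hinner]
  -- now the RHS
  have hRHSset : {ω | T ω ≤ min (C ω) t}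
      = (fun ω => (C ω, T ω)) ⁻¹' {p : ℝ × ℝ | p.2 ≤ min p.1 t} := rfl
  have hmeasset : MeasurableSet {p : ℝ × ℝ | p.2 ≤ min p.1 t} := by
    apply measurableSet_le measurable_snd
    exact measurable_fst.min measurable_const
  rw [hRHSset, Measure.map_apply (hC.prodMk hT) hmeasset |>.symm, hρ,
    Measure.prod_apply hmeasset]
  have hslice : ∀ c : ℝ, (Prod.mk c ⁻¹' {p : ℝ × ℝ | p.2 ≤ min p.1 t}) = Iic (min c t) := by
    intro c; rfl
  simp_rw [hslice]
  have hmono : Measurable fun c : ℝ => μT (Iic (min c t)) := by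
    have : Monotone fun s : ℝ => μT (Iic s) := fun a b hab => measure_mono (Iic_subset_Iic.2 hab)
    exact this.measurable.comp (measurable_id.min measurable_const)
  rw [← integral_toReal (hmono.aemeasurable)
    (Filter.Eventually.of_forall fun c => measure_lt_top _ _)]
  apply integral_congr_ae
  have hae : ∀ᵐ c ∂μC, 0 ≤ c := by
    rw [hμC, ae_map_iff hC.aemeasurable]
    · exact Filter.Eventually.of_forall hCnn
    · exact measurableSet_Ici
  filter_upwards [hae] with c hc
  rw [max_eq_left hc]

/-- Under the parametric survival model, consistency of the estimator sequence
(independent of the group-B data) and the asymptotic regime, the mean accumulated hazard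
`(1/n_B(k)) ∑_{i<n_B(k)} Λ(θ̂_A, min(t, X_i))` converges in probability to
`V₁(t) = E[Λ(θ_A, min(t, X_1))] = P[T_1 ≤ min(C_1, t)]`. -/

theorem stmt6 {q : ℕ}
    -- survival model
    (Θ : Set (Fin q → ℝ)) (hΘopen : IsOpen Θ) (θA : Fin q → ℝ) (hθA : θA ∈ Θ)
    (Λ : (Fin q → ℝ) → ℝ → ℝ)
    (hΛcont : ContinuousOn (fun p : (Fin q → ℝ) × ℝ => Λ p.1 p.2) (Θ ×ˢ Ici 0))
    (hΛ0 : ∀ θ ∈ Θ, Λ θ 0 = 0)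
    (hΛmono : ∀ θ ∈ Θ, MonotoneOn (Λ θ) (Ici 0))
    (hΛnonneg : ∀ θ ∈ Θ, ∀ s ∈ Ici (0 : ℝ), 0 ≤ Λ θ s)
    (tmax : ℝ) (htmax : 0 < tmax)
    {Ω : Type*} [MeasurableSpace Ω] (P : Measure Ω) [IsProbabilityMeasure P]
    (T C : ℕ → Ω → ℝ)
    (hT : ∀ i, Measurable (T i)) (hC : ∀ i, Measurable (C i))
    (hTnonneg : ∀ i ω, 0 ≤ T i ω) (hCnonneg : ∀ i ω, 0 ≤ C i ω)
    (hiid : iIndepFun (fun i ω => (T i ω, C i ω)) P)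
    (hident : ∀ i, P.map (fun ω => (T i ω, C i ω)) = P.map (fun ω => (T 0 ω, C 0 ω)))
    (hTC : ∀ i, IndepFun (T i) (C i) P)
    (hsurv : ∀ i, ∀ s ∈ Ici (0 : ℝ),
      P {ω | s < T i ω} = ENNReal.ofReal (Real.exp (-(Λ θA s))))
    (hXle : ∀ i, ∀ᵐ ω ∂P, min (T i ω) (C i ω) ≤ tmax)
    -- the fixed time point
    (t : ℝ) (ht : t ∈ Ioc 0 tmax)
    -- estimator assumptions
    (θhat : ℕ → Ω → (Fin q → ℝ))
    (hθhatmeas : ∀ m, Measurable (θhat m))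
    (hθhatΘ : ∀ m ω, θhat m ω ∈ Θ)
    (hθhatindep : IndepFun (fun ω => fun m => θhat m ω) (fun ω => fun i => (T i ω, C i ω)) P)
    (hθhatprob : TendstoInMeasure P θhat atTop (fun _ => θA))
    -- asymptotic regime
    (nA nB : ℕ → ℕ) (hnA : Tendsto nA atTop atTop) (hnB : Tendsto nB atTop atTop)
    (π : ℝ) (hπ : 0 < π)
    (hratio : Tendsto (fun k => (nB k : ℝ) / (nA k : ℝ)) atTop (𝓝 π))
    -- the limiting variance
    (V₁ : ℝ) (hV₁ : V₁ = ∫ ω, Λ θA (min t (min (T 0 ω) (C 0 ω))) ∂P) :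
    TendstoInMeasure P
      (fun k ω => (nB k : ℝ)⁻¹ *
        ∑ i ∈ Finset.range (nB k), Λ (θhat (nA k) ω) (min t (min (T i ω) (C i ω))))
      atTop (fun _ => V₁)
    ∧ V₁ = (P {ω | T 0 ω ≤ min (C 0 ω) t}).toReal := by
  have ht0 : 0 < t := ht.1
  -- continuity of the hazard at the true parameter
  have hΛθA : ContinuousOn (Λ θA) (Ici 0) :=
    hΛcont.comp (Continuous.continuousOn (continuous_const.prodMk continuous_id))
      (fun s hs => ⟨hθA, hs⟩)
  have hΛm := hΛmono θA hθA
  have hΛnn := hΛnonneg θA hθA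
  -- part 2
  have hpart2 : V₁ = (P {ω | T 0 ω ≤ min (C 0 ω) t}).toReal := by
    rw [hV₁]
    exact hazard_expectation (Λ θA) hΛθA (hΛ0 θA hθA) hΛm P (T 0) (C 0) (hT 0) (hC 0)
      (hTnonneg 0) (hCnonneg 0) (hTC 0) (hsurv 0) t ht0
  -- truncated observation times
  set X : ℕ → Ω → ℝ := fun i ω => min t (min (T i ω) (C i ω)) with hXdef
  have hXmem : ∀ i ω, X i ω ∈ Icc 0 t := fun i ω =>
    ⟨le_min ht0.le (le_min (hTnonneg i ω) (hCnonneg i ω)), min_le_left _ _⟩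
  -- clamped hazard & composite map
  set gA : ℝ → ℝ := fun s => Λ θA (min (max s 0) t) with hgAdef
  have hgAc : Continuous gA := by
    apply hΛθA.comp_continuous ((continuous_id.max continuous_const).min continuous_const)
    exact fun s => le_min (le_max_right _ _) ht0.le
  set ψ : ℝ × ℝ → ℝ := fun p => gA (min t (min p.1 p.2)) with hψdef
  have hψc : Continuous ψ :=
    hgAc.comp (continuous_const.min (continuous_fst.min continuous_snd))
  set Y : ℕ → Ω → ℝ := fun i ω => ψ (T i ω, C i ω) with hYdef
  have hgAeq : ∀ s ∈ Icc (0:ℝ) t, gA s = Λ θA s := by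
    intro s hs
    rw [hgAdef]
    simp only [max_eq_left hs.1, min_eq_left hs.2]
  have hYeq : ∀ i ω, Y i ω = Λ θA (X i ω) := fun i ω => hgAeq _ (hXmem i ω)
  have hYmeas : ∀ i, Measurable (Y i) :=
    fun i => hψc.measurable.comp ((hT i).prodMk (hC i))
  have hYnn : ∀ i ω, 0 ≤ Y i ω := fun i ω => (hYeq i ω) ▸ hΛnn _ (hXmem i ω).1
  have hYle : ∀ i ω, Y i ω ≤ Λ θA t := fun i ω =>
    (hYeq i ω) ▸ hΛm (hXmem i ω).1 ht0.le (hXmem i ω).2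
  have hYint : Integrable (Y 0) P := by
    refine Integrable.mono' (integrable_const (Λ θA t))
      (hYmeas 0).aestronglyMeasurable ?_
    filter_upwards with ω
    rw [Real.norm_of_nonneg (hYnn 0 ω)]
    exact hYle 0 ω
  have hYindep : Pairwise (Function.onFun (IndepFun · · P) Y) := fun i j hij =>
    (hiid.comp (fun _ => ψ) (fun _ => hψc.measurable)).indepFun hij
  have hYident : ∀ i, IdentDistrib (Y i) (Y 0) P P := by
    intro i
    have hpair : IdentDistrib (fun ω => (T i ω, C i ω)) (fun ω => (T 0 ω, C 0 ω)) P P :=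
      ⟨((hT i).prodMk (hC i)).aemeasurable, ((hT 0).prodMk (hC 0)).aemeasurable, hident i⟩
    exact hpair.comp hψc.measurable
  have hmean : ∫ ω, Y 0 ω ∂P = V₁ := by
    rw [hV₁]
    exact integral_congr_ae (Filter.Eventually.of_forall fun ω => hYeq 0 ω)
  have hLLN := ProbabilityTheory.strong_law_ae_real Y hYint hYindep hYident
  -- the averaged process with the true parameter
  set A : ℕ → Ω → ℝ := fun k ω => (nB k : ℝ)⁻¹ * ∑ i ∈ Finset.range (nB k), Y i ω with hAdef
  have hAtend : ∀ᵐ ω ∂P, Tendsto (fun k => A k ω) atTop (𝓝 V₁) := by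
    filter_upwards [hLLN] with ω hω
    rw [hmean] at hω
    have h2 := hω.comp hnB
    have : (fun k => A k ω)
        = (fun n : ℕ => (∑ i ∈ Finset.range n, Y i ω) / n) ∘ nB := by
      funext k
      simp only [hAdef, Function.comp_apply, inv_mul_eq_div]
    rw [this]
    exact h2
  have hAmeas : ∀ k, AEStronglyMeasurable (A k) P := fun k =>
    ((Finset.measurable_sum _ (fun i _ => hYmeas i)).const_mul _).aestronglyMeasurable
  have hAprob : TendstoInMeasure P A atTop (fun _ => V₁) :=
    tendstoInMeasure_of_tendsto_ae hAmeas hAtend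
  -- uniform continuity on a compact neighbourhood
  obtain ⟨r, hr0, hrΘ⟩ : ∃ r > 0, Metric.closedBall θA r ⊆ Θ := by
    obtain ⟨e, he0, heΘ⟩ := Metric.isOpen_iff.1 hΘopen θA hθA
    exact ⟨e/2, by linarith, (Metric.closedBall_subset_ball (by linarith)).trans heΘ⟩
  have hKcompact : IsCompact ((Metric.closedBall θA r) ×ˢ Icc (0:ℝ) t) :=
    (isCompact_closedBall θA r).prod isCompact_Icc
  have hKsub : (Metric.closedBall θA r) ×ˢ Icc (0:ℝ) t ⊆ Θ ×ˢ Ici 0 :=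
    prod_mono hrΘ Icc_subset_Ici_self
  have hUC := hKcompact.uniformContinuousOn_of_continuous (hΛcont.mono hKsub)
  rw [Metric.uniformContinuousOn_iff] at hUC
  refine ⟨?_, hpart2⟩
  rw [tendstoInMeasure_iff_dist]
  intro ε hε
  obtain ⟨δ₀, hδ₀, hδ⟩ := hUC (ε/2) (by linarith)
  set δ : ℝ := min δ₀ r with hδdef
  have hδpos : 0 < δ := lt_min hδ₀ hr0
  have hsub : ∀ k,
      {ω | ε ≤ dist ((nB k : ℝ)⁻¹ *
        ∑ i ∈ Finset.range (nB k), Λ (θhat (nA k) ω) (min t (min (T i ω) (C i ω)))) V₁}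
      ⊆ {ω | δ ≤ dist (θhat (nA k) ω) θA} ∪ {ω | ε/2 ≤ dist (A k ω) V₁} := by
    intro k ω hω
    simp only [mem_setOf_eq] at hω
    by_contra hc
    simp only [mem_union, mem_setOf_eq, not_or, not_le] at hc
    obtain ⟨h1, h2⟩ := hc
    have hthetaK : θhat (nA k) ω ∈ Metric.closedBall θA r :=
      Metric.mem_closedBall.2 (le_of_lt (h1.trans_le (min_le_right _ _)))
    have hterm : ∀ i, |Λ (θhat (nA k) ω) (X i ω) - Y i ω| ≤ ε/2 := by
      intro i
      rw [hYeq i ω]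
      have hd : dist ((θhat (nA k) ω, X i ω) : (Fin q → ℝ) × ℝ) (θA, X i ω) < δ₀ := by
        rw [Prod.dist_eq]
        simp only [dist_self]
        rw [max_eq_left dist_nonneg]
        exact lt_of_lt_of_le h1 (min_le_left _ _)
      have := hδ (θhat (nA k) ω, X i ω) ⟨hthetaK, hXmem i ω⟩ (θA, X i ω)
        ⟨Metric.mem_closedBall_self hr0.le, hXmem i ω⟩ hd
      rw [Real.dist_eq] at this
      exact this.le
    have hdistSA : dist ((nB k : ℝ)⁻¹ *
        ∑ i ∈ Finset.range (nB k), Λ (θhat (nA k) ω) (min t (min (T i ω) (C i ω))))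
        (A k ω) ≤ ε/2 := by
      rw [Real.dist_eq, hAdef, ← mul_sub, ← Finset.sum_sub_distrib, abs_mul]
      have habs : |∑ i ∈ Finset.range (nB k),
          (Λ (θhat (nA k) ω) (X i ω) - Y i ω)| ≤ (nB k : ℝ) * (ε/2) := by
        refine (Finset.abs_sum_le_sum_abs _ _).trans ?_
        calc ∑ i ∈ Finset.range (nB k), |Λ (θhat (nA k) ω) (X i ω) - Y i ω|
            ≤ ∑ _i ∈ Finset.range (nB k), (ε/2) :=
              Finset.sum_le_sum (fun i _ => hterm i)
          _ = (nB k : ℝ) * (ε/2) := by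
              rw [Finset.sum_const, Finset.card_range, nsmul_eq_mul]
      calc |((nB k : ℝ))⁻¹| * |∑ i ∈ Finset.range (nB k),
            (Λ (θhat (nA k) ω) (X i ω) - Y i ω)|
          ≤ ((nB k : ℝ))⁻¹ * ((nB k : ℝ) * (ε/2)) := by
            rw [abs_of_nonneg (by positivity : (0:ℝ) ≤ ((nB k : ℝ))⁻¹)]
            exact mul_le_mul_of_nonneg_left habs (by positivity)
        _ ≤ ε/2 := by
            rcases eq_or_ne ((nB k : ℝ)) 0 with h | h
            · simp [h]; linarith
            · rw [← mul_assoc, inv_mul_cancel₀ h, one_mul]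
    have : dist ((nB k : ℝ)⁻¹ *
        ∑ i ∈ Finset.range (nB k), Λ (θhat (nA k) ω) (min t (min (T i ω) (C i ω)))) V₁ < ε :=
      lt_of_le_of_lt (dist_triangle _ (A k ω) _) (by linarith)
    exact absurd hω (not_le.2 this)
  have hb1 : Tendsto (fun k => P {ω | δ ≤ dist (θhat (nA k) ω) θA}) atTop (𝓝 0) :=
    (tendstoInMeasure_iff_dist.1 hθhatprob δ hδpos).comp hnA
  have hb2 : Tendsto (fun k => P {ω | ε/2 ≤ dist (A k ω) V₁}) atTop (𝓝 0) :=
    tendstoInMeasure_iff_dist.1 hAprob (ε/2) (by linarith)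
  have hsum := hb1.add hb2
  rw [add_zero] at hsum
  refine tendsto_of_tendsto_of_tendsto_of_le_of_le tendsto_const_nhds hsum
    (fun k => zero_le') (fun k => ?_)
  exact (measure_mono (hsub k)).trans (measure_union_le _ _)
end

section
/- Fix t ∈ (0, t_max] and w ∈ [0,1]. Under the survival model, the estimator assumption that θ̂^{(m)} → θ_A in probability with (θ̂^{(m)}) independent of the group-B data, and the asymptotic regime, the weighted variance estimator (1/n_B(k)) ( w · N_B(t) + (1−w) · ∑_{i=1}^{n_B(k)} Λ(θ̂_A, min(t, X_{B,i})) ) converges in probability, as k → ∞, to V₁(t). -/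
open MeasureTheory ProbabilityTheory Filter Topology Set

/-- Layer-cake computation for the survival model. -/
lemma surv_layercake (G : ℝ → ℝ) (hGc : Continuous G) (hGm : Monotone G)
    (hG0 : ∀ s ≤ (0:ℝ), G s = 0)
    (ν : Measure ℝ) [IsProbabilityMeasure ν]
    (hν : ∀ s : ℝ, ν (Ioi s) = ENNReal.ofReal (Real.exp (-(G s)))) (u : ℝ) :
    ∫ τ, G (min u τ) ∂ν = 1 - Real.exp (-(G u)) := by
  have hGnn : ∀ s, 0 ≤ G s := by
    intro s
    rcases le_total s 0 with h | h
    · rw [hG0 s h]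
    · rw [← hG0 0 le_rfl]; exact hGm h
  set f : ℝ → ℝ := fun τ => G (min u τ) with hf
  have hfc : Continuous f := hGc.comp (continuous_const.min continuous_id)
  have hfub : ∀ τ, f τ ≤ G u := fun τ => hGm (min_le_left _ _)
  have hint : Integrable f ν := by
    refine (integrable_const (G u)).mono' hfc.aestronglyMeasurable ?_
    exact Eventually.of_forall fun τ => by
      rw [Real.norm_eq_abs, abs_of_nonneg (hGnn _)]; exact hfub τ
  rw [hint.integral_eq_integral_meas_lt (Eventually.of_forall fun τ => hGnn _)]
  have hkey : ∀ y ∈ Ioi (0:ℝ),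
      ENNReal.toReal (ν {a : ℝ | y < f a}) =
        Set.indicator (Ioo 0 (G u)) (fun y => Real.exp (-y)) y := by
    intro y hy
    rw [mem_Ioi] at hy
    by_cases hyu : y < G u
    · -- the sup
      have hu0 : 0 < u := by
        by_contra h
        push_neg at h
        rw [hG0 u h] at hyu
        exact absurd hyu (not_lt.mpr hy.le)
      set S : Set ℝ := Icc 0 u ∩ G ⁻¹' (Iic y) with hS
      have hSne : S.Nonempty := ⟨0, ⟨le_rfl, hu0.le⟩, by
        simp only [mem_preimage, mem_Iic, hG0 0 le_rfl]; exact hy.le⟩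
      have hSbdd : BddAbove S := ⟨u, fun s hs => hs.1.2⟩
      have hScl : IsClosed S := isClosed_Icc.inter (isClosed_Iic.preimage hGc)
      set σ := sSup S with hσ
      have hσS : σ ∈ S := hScl.csSup_mem hSne hSbdd
      have hσ0 : 0 ≤ σ := hσS.1.1
      have hσu : σ ≤ u := hσS.1.2
      have hσy : G σ ≤ y := hσS.2
      have hGσy : G σ = y := by
        rcases lt_or_eq_of_le hσy with hlt | heq
        · exfalso
          have : y ∈ Ioo (G σ) (G u) := ⟨hlt, hyu⟩
          have := intermediate_value_Ioo hσu hGc.continuousOn this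
          obtain ⟨s, hsIoo, hGs⟩ := this
          have hsS : s ∈ S := ⟨⟨hσ0.trans hsIoo.1.le, hsIoo.2.le⟩, by
            simp [mem_preimage, mem_Iic, hGs]⟩
          exact absurd (le_csSup hSbdd hsS) (not_le.mpr hsIoo.1)
        · exact heq
      have hσltu : σ < u := lt_of_le_of_ne hσu (by
        intro h
        have : G u = y := by rw [← h, hGσy]
        rw [this] at hyu
        exact lt_irrefl y hyu)
      have hset : {a : ℝ | y < f a} = Ioi σ := by
        ext τ
        simp only [mem_setOf_eq, mem_Ioi, hf]
        constructor
        · intro hlt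
          by_contra h
          push_neg at h
          have : G (min u τ) ≤ G σ := hGm ((min_le_right u τ).trans h)
          rw [hGσy] at this
          exact absurd hlt (not_lt.mpr this)
        · intro hlt
          by_contra h
          push_neg at h
          have hmin : min u τ ∈ S :=
            Set.mem_inter (Set.mem_Icc.mpr ⟨hσ0.trans (lt_min hσltu hlt).le, min_le_left _ _⟩)
              (by simp [mem_preimage, mem_Iic, h])
          exact absurd (le_csSup hSbdd hmin) (not_le.mpr (lt_min hσltu hlt))
      rw [hset, hν σ, hGσy, ENNReal.toReal_ofReal (Real.exp_nonneg _),
        Set.indicator_of_mem (Set.mem_Ioo.mpr ⟨hy, hyu⟩)]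
    · push_neg at hyu
      have hset : {a : ℝ | y < f a} = ∅ := by
        ext τ
        simp only [mem_setOf_eq, mem_empty_iff_false, iff_false, not_lt]
        exact (hfub τ).trans hyu
      rw [hset, measure_empty, ENNReal.toReal_zero,
        Set.indicator_of_notMem (fun hmem => absurd hmem.2 (not_lt.mpr hyu))]
  rw [setIntegral_congr_fun measurableSet_Ioi (fun y hy => (measureReal_def ν _).trans (hkey y hy))]
  rw [setIntegral_indicator measurableSet_Ioo]
  have hInter : Ioi (0:ℝ) ∩ Ioo 0 (G u) = Ioo 0 (G u) :=
    inter_eq_right.mpr (fun y hy => hy.1)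
  rw [hInter, ← integral_Ioc_eq_integral_Ioo,
    ← intervalIntegral.integral_of_le (hGnn u)]
  rw [intervalIntegral.integral_comp_neg (fun y => Real.exp y)]
  rw [integral_exp]
  simp


lemma surv_indicator (G : ℝ → ℝ) (u : ℝ) (hGu : 0 ≤ G u)
    (ν : Measure ℝ) [IsProbabilityMeasure ν]
    (hν : ν (Ioi u) = ENNReal.ofReal (Real.exp (-(G u)))) :
    ∫ τ, (if τ ≤ u then (1:ℝ) else 0) ∂ν = 1 - Real.exp (-(G u)) := by
  have h1 : (fun τ : ℝ => if τ ≤ u then (1:ℝ) else 0)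
      = (Iic u).indicator (fun _ => (1:ℝ)) := by
    funext τ
    simp [Set.indicator_apply, mem_Iic]
  rw [h1, integral_indicator_const (1:ℝ) measurableSet_Iic]
  have h2 : ν (Iic u) = 1 - ENNReal.ofReal (Real.exp (-(G u))) := by
    rw [← compl_Ioi, prob_compl_eq_one_sub measurableSet_Ioi, hν]
  have h2' : ν (Iic u) = ENNReal.ofReal (1 - Real.exp (-(G u))) := by
    rw [h2, ← ENNReal.ofReal_one, ← ENNReal.ofReal_sub _ (Real.exp_nonneg _)]
  have hexp1 : Real.exp (-(G u)) ≤ 1 := Real.exp_le_one_iff.mpr (neg_nonpos.mpr hGu)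
  rw [measureReal_def, h2', ENNReal.toReal_ofReal (by linarith), smul_eq_mul, mul_one]

lemma tube_lemma {q : ℕ} (Θ : Set (Fin q → ℝ)) (θA : Fin q → ℝ) (hθA : θA ∈ Θ)
    (Λ : (Fin q → ℝ) → ℝ → ℝ)
    (hΛcont : ContinuousOn (fun p : (Fin q → ℝ) × ℝ => Λ p.1 p.2) (Θ ×ˢ Ici 0))
    (t : ℝ) (ε : ℝ) (hε : 0 < ε) :
    ∃ δ > 0, ∀ θ ∈ Θ, dist θ θA < δ → ∀ s ∈ Icc (0:ℝ) t, |Λ θ s - Λ θA s| ≤ ε := by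
  have key : ∀ s : ℝ, ∃ (U : Set (Fin q → ℝ)) (V : Set ℝ), IsOpen U ∧ θA ∈ U ∧
      (s ∈ Icc (0:ℝ) t → IsOpen V ∧ s ∈ V ∧
        ∀ θ ∈ U ∩ Θ, ∀ s' ∈ V ∩ Ici (0:ℝ), |Λ θ s' - Λ θA s| < ε / 2) := by
    intro s
    by_cases hs : s ∈ Icc (0:ℝ) t
    · have hmem : (θA, s) ∈ Θ ×ˢ Ici (0:ℝ) := ⟨hθA, hs.1⟩
      have hc := hΛcont (θA, s) hmem
      have hball : Metric.ball (Λ θA s) (ε / 2) ∈ 𝓝 (Λ θA s) :=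
        Metric.ball_mem_nhds _ (half_pos hε)
      have hpre := hc hball
      rw [Filter.mem_map, mem_nhdsWithin] at hpre
      obtain ⟨W, hWopen, hWmem, hWsub⟩ := hpre
      obtain ⟨U, V, hUopen, hVopen, hθAU, hsV, hUVsub⟩ := isOpen_prod_iff.mp hWopen θA s hWmem
      refine ⟨U, V, hUopen, hθAU, fun _ => ⟨hVopen, hsV, ?_⟩⟩
      intro θ hθ s' hs'
      have : (θ, s') ∈ W ∩ Θ ×ˢ Ici 0 := ⟨hUVsub ⟨hθ.1, hs'.1⟩, hθ.2, hs'.2⟩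
      have := hWsub this
      simpa [Metric.mem_ball, Real.dist_eq] using this
    · exact ⟨univ, ∅, isOpen_univ, mem_univ _, fun h => absurd h hs⟩
  choose U V hUopen hθAU hrest using key
  obtain ⟨I, hI, hIcover⟩ := isCompact_Icc.elim_nhds_subcover V
    (fun s hs => ((hrest s hs).1).mem_nhds (hrest s hs).2.1)
  have hU'open : IsOpen (⋂ s ∈ I, U s) := isOpen_biInter_finset (fun s _ => hUopen s)
  have hθAU' : θA ∈ ⋂ s ∈ I, U s := mem_iInter₂.mpr (fun s _ => hθAU s)
  obtain ⟨δ, hδpos, hδball⟩ := Metric.isOpen_iff.mp hU'open θA hθAU'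
  refine ⟨δ, hδpos, ?_⟩
  intro θ hθΘ hθd s' hs'
  obtain ⟨s, hsI, hs'V⟩ := mem_iUnion₂.mp (hIcover hs')
  obtain ⟨hVopen, hsV, hprop⟩ := hrest s (hI s hsI)
  have hθU : θ ∈ U s := mem_iInter₂.mp (hδball hθd) s hsI
  have hθAUs : θA ∈ U s := hθAU s
  have h1 := hprop θ ⟨hθU, hθΘ⟩ s' ⟨hs'V, hs'.1⟩
  have h2 := hprop θA ⟨hθAUs, hθA⟩ s' ⟨hs'V, hs'.1⟩
  calc |Λ θ s' - Λ θA s'| ≤ |Λ θ s' - Λ θA s| + |Λ θA s - Λ θA s'| := abs_sub_le _ _ _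
    _ ≤ ε / 2 + ε / 2 := by
        rw [abs_sub_comm (Λ θA s)]
        exact add_le_add h1.le h2.le
    _ = ε := by ring


lemma exp_identity {Ω : Type*} [MeasurableSpace Ω] (P : Measure Ω) [IsProbabilityMeasure P]
    (T C : Ω → ℝ) (hT : Measurable T) (hC : Measurable C)
    (hTC : IndepFun T C P)
    (G : ℝ → ℝ) (hGc : Continuous G) (hGm : Monotone G) (hG0 : ∀ s ≤ (0:ℝ), G s = 0)
    (hsurv : ∀ s : ℝ, P {ω | s < T ω} = ENNReal.ofReal (Real.exp (-(G s))))
    (t : ℝ) :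
    ∫ ω, (if T ω ≤ min t (C ω) then (1:ℝ) else 0) ∂P
      = ∫ ω, G (min t (min (T ω) (C ω))) ∂P := by
  have hGnn : ∀ s, 0 ≤ G s := by
    intro s
    rcases le_total s 0 with h | h
    · rw [hG0 s h]
    · rw [← hG0 0 le_rfl]; exact hGm h
  set μT : Measure ℝ := P.map T with hμT
  set μC : Measure ℝ := P.map C with hμC
  haveI : IsProbabilityMeasure μT := Measure.isProbabilityMeasure_map hT.aemeasurable
  haveI : IsProbabilityMeasure μC := Measure.isProbabilityMeasure_map hC.aemeasurable
  have hν : ∀ s : ℝ, μT (Ioi s) = ENNReal.ofReal (Real.exp (-(G s))) := by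
    intro s
    rw [hμT, Measure.map_apply hT measurableSet_Ioi]
    have : T ⁻¹' Ioi s = {ω | s < T ω} := rfl
    rw [this, hsurv s]
  have hρ : P.map (fun ω => (T ω, C ω)) = μT.prod μC :=
    (indepFun_iff_map_prod_eq_prod_map_map hT.aemeasurable hC.aemeasurable).mp hTC
  set f₁ : ℝ × ℝ → ℝ := fun p => if p.1 ≤ min t p.2 then 1 else 0 with hf₁
  set f₂ : ℝ × ℝ → ℝ := fun p => G (min t (min p.1 p.2)) with hf₂
  have hf₁m : Measurable f₁ :=
    Measurable.ite (measurableSet_le measurable_fst (measurable_const.min measurable_snd))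
      measurable_const measurable_const
  have hf₂c : Continuous f₂ := hGc.comp (continuous_const.min (continuous_fst.min continuous_snd))
  have hL : ∫ ω, (if T ω ≤ min t (C ω) then (1:ℝ) else 0) ∂P = ∫ p, f₁ p ∂(μT.prod μC) := by
    rw [← hρ, integral_map (hT.prodMk hC).aemeasurable hf₁m.aestronglyMeasurable]
  have hR : ∫ ω, G (min t (min (T ω) (C ω))) ∂P = ∫ p, f₂ p ∂(μT.prod μC) := by
    rw [← hρ, integral_map (hT.prodMk hC).aemeasurable hf₂c.aestronglyMeasurable]
  have hint₁ : Integrable f₁ (μT.prod μC) := by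
    refine (integrable_const (1:ℝ)).mono' hf₁m.aestronglyMeasurable ?_
    refine Eventually.of_forall fun p => ?_
    simp only [hf₁, Real.norm_eq_abs]
    split_ifs <;> simp
  have hint₂ : Integrable f₂ (μT.prod μC) := by
    refine (integrable_const (G t)).mono' hf₂c.aestronglyMeasurable ?_
    refine Eventually.of_forall fun p => ?_
    rw [Real.norm_eq_abs, abs_of_nonneg (hGnn _)]
    exact hGm (min_le_left _ _)
  rw [hL, hR, integral_prod_symm _ hint₁, integral_prod_symm _ hint₂]
  refine integral_congr_ae (Eventually.of_forall fun c => ?_)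
  have h1 : ∫ τ, f₁ (τ, c) ∂μT = 1 - Real.exp (-(G (min t c))) :=
    surv_indicator G (min t c) (hGnn _) μT (hν _)
  have h2 : ∫ τ, f₂ (τ, c) ∂μT = 1 - Real.exp (-(G (min t c))) := by
    have heq : ∀ τ : ℝ, f₂ (τ, c) = G (min (min t c) τ) := by
      intro τ
      simp only [hf₂]
      rw [min_comm τ c]
      exact congrArg G (min_assoc t c τ).symm
    rw [show (fun τ => f₂ (τ, c)) = fun τ => G (min (min t c) τ) from funext heq]
    exact surv_layercake G hGc hGm hG0 μT hν (min t c)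
  show ∫ τ, f₁ (τ, c) ∂μT = ∫ τ, f₂ (τ, c) ∂μT
  rw [h1, h2]


/-- Under the parametric survival model, consistency of the estimator sequence
(independent of the group-B data) and the asymptotic regime, the weighted variance estimator
`(1/n_B(k)) (w · N_B(t) + (1−w) ∑_{i<n_B(k)} Λ(θ̂_A, min(t, X_i)))` converges in probability
to `V₁(t)` for any `w ∈ [0,1]`. -/
theorem stmt7 {q : ℕ}
    -- survival model
    (Θ : Set (Fin q → ℝ)) (hΘopen : IsOpen Θ) (θA : Fin q → ℝ) (hθA : θA ∈ Θ)
    (Λ : (Fin q → ℝ) → ℝ → ℝ)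
    (hΛcont : ContinuousOn (fun p : (Fin q → ℝ) × ℝ => Λ p.1 p.2) (Θ ×ˢ Ici 0))
    (hΛ0 : ∀ θ ∈ Θ, Λ θ 0 = 0)
    (hΛmono : ∀ θ ∈ Θ, MonotoneOn (Λ θ) (Ici 0))
    (hΛnonneg : ∀ θ ∈ Θ, ∀ s ∈ Ici (0 : ℝ), 0 ≤ Λ θ s)
    (tmax : ℝ) (htmax : 0 < tmax)
    {Ω : Type*} [MeasurableSpace Ω] (P : Measure Ω) [IsProbabilityMeasure P]
    (T C : ℕ → Ω → ℝ)
    (hT : ∀ i, Measurable (T i)) (hC : ∀ i, Measurable (C i))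
    (hTnonneg : ∀ i ω, 0 ≤ T i ω) (hCnonneg : ∀ i ω, 0 ≤ C i ω)
    (hiid : iIndepFun (fun i ω => (T i ω, C i ω)) P)
    (hident : ∀ i, P.map (fun ω => (T i ω, C i ω)) = P.map (fun ω => (T 0 ω, C 0 ω)))
    (hTC : ∀ i, IndepFun (T i) (C i) P)
    (hsurv : ∀ i, ∀ s ∈ Ici (0 : ℝ),
      P {ω | s < T i ω} = ENNReal.ofReal (Real.exp (-(Λ θA s))))
    (hXle : ∀ i, ∀ᵐ ω ∂P, min (T i ω) (C i ω) ≤ tmax)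
    -- the fixed time point
    (t : ℝ) (ht : t ∈ Ioc 0 tmax)
    -- estimator assumptions
    (θhat : ℕ → Ω → (Fin q → ℝ))
    (hθhatmeas : ∀ m, Measurable (θhat m))
    (hθhatΘ : ∀ m ω, θhat m ω ∈ Θ)
    (hθhatindep : IndepFun (fun ω => fun m => θhat m ω) (fun ω => fun i => (T i ω, C i ω)) P)
    (hθhatprob : TendstoInMeasure P θhat atTop (fun _ => θA))
    -- asymptotic regime
    (nA nB : ℕ → ℕ) (hnA : Tendsto nA atTop atTop) (hnB : Tendsto nB atTop atTop)
    (π : ℝ) (hπ : 0 < π)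
    (hratio : Tendsto (fun k => (nB k : ℝ) / (nA k : ℝ)) atTop (𝓝 π))
    -- the weight
    (w : ℝ) (hw : w ∈ Icc (0 : ℝ) 1)
    -- the limiting variance
    (V₁ : ℝ) (hV₁ : V₁ = ∫ ω, Λ θA (min t (min (T 0 ω) (C 0 ω))) ∂P) :
    TendstoInMeasure P
      (fun k ω => (nB k : ℝ)⁻¹ *
        (w * (∑ i ∈ Finset.range (nB k), if T i ω ≤ min t (C i ω) then (1 : ℝ) else 0)
          + (1 - w) *
            ∑ i ∈ Finset.range (nB k), Λ (θhat (nA k) ω) (min t (min (T i ω) (C i ω)))))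
      atTop (fun _ => V₁) := by
  classical
  -- the cumulative hazard as a globally defined function
  set G : ℝ → ℝ := fun s => Λ θA (max 0 s) with hG
  have hGc : Continuous G := hΛcont.comp_continuous
    (continuous_const.prodMk (continuous_const.max continuous_id))
    (fun s => ⟨hθA, le_max_left 0 s⟩)
  have hGm : Monotone G := fun a b hab =>
    hΛmono θA hθA (le_max_left 0 a) (le_max_left 0 b) (max_le_max le_rfl hab)
  have hG0 : ∀ s ≤ (0:ℝ), G s = 0 := by
    intro s hs
    simp only [hG]
    rw [max_eq_left hs]
    exact hΛ0 θA hθA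
  have hGeq : ∀ s : ℝ, 0 ≤ s → G s = Λ θA s := by
    intro s hs
    simp only [hG]
    rw [max_eq_right hs]
  have hGnn : ∀ s, 0 ≤ G s := by
    intro s
    rcases le_total s 0 with h | h
    · rw [hG0 s h]
    · rw [← hG0 0 le_rfl]; exact hGm h
  have hsurvG : ∀ s : ℝ, P {ω | s < T 0 ω} = ENNReal.ofReal (Real.exp (-(G s))) := by
    intro s
    rcases le_or_gt 0 s with hs | hs
    · rw [hGeq s hs]; exact hsurv 0 s hs
    · have huniv : {ω | s < T 0 ω} = univ :=
        eq_univ_of_forall fun ω => lt_of_lt_of_le hs (hTnonneg 0 ω)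
      rw [huniv, measure_univ, hG0 s hs.le]
      simp
  -- the two sequences of i.i.d. random variables
  set f₁ : ℝ × ℝ → ℝ := fun p => if p.1 ≤ min t p.2 then 1 else 0 with hf₁def
  set f₂ : ℝ × ℝ → ℝ := fun p => G (min t (min p.1 p.2)) with hf₂def
  have hf₁m : Measurable f₁ :=
    Measurable.ite (measurableSet_le measurable_fst (measurable_const.min measurable_snd))
      measurable_const measurable_const
  have hf₂c : Continuous f₂ := hGc.comp (continuous_const.min (continuous_fst.min continuous_snd))
  set X1 : ℕ → Ω → ℝ := fun i ω => f₁ (T i ω, C i ω) with hX1def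
  set X2 : ℕ → Ω → ℝ := fun i ω => f₂ (T i ω, C i ω) with hX2def
  have hX1m : ∀ i, Measurable (X1 i) := fun i => hf₁m.comp ((hT i).prodMk (hC i))
  have hX2m : ∀ i, Measurable (X2 i) := fun i => hf₂c.measurable.comp ((hT i).prodMk (hC i))
  have hint1 : Integrable (X1 0) P := by
    refine (integrable_const (1:ℝ)).mono' (hX1m 0).aestronglyMeasurable ?_
    refine Eventually.of_forall fun ω => ?_
    simp only [hX1def, hf₁def, Real.norm_eq_abs]
    split_ifs <;> simp
  have hint2 : Integrable (X2 0) P := by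
    refine (integrable_const (G t)).mono' (hX2m 0).aestronglyMeasurable ?_
    refine Eventually.of_forall fun ω => ?_
    simp only [hX2def, hf₂def, Real.norm_eq_abs]
    rw [abs_of_nonneg (hGnn _)]
    exact hGm (min_le_left _ _)
  have hZident : ∀ i, IdentDistrib (fun ω => (T i ω, C i ω)) (fun ω => (T 0 ω, C 0 ω)) P P :=
    fun i => ⟨((hT i).prodMk (hC i)).aemeasurable, ((hT 0).prodMk (hC 0)).aemeasurable, hident i⟩
  have hindep1 : Pairwise (Function.onFun (IndepFun · · P) X1) :=
    fun i j hij => (hiid.comp (fun _ => f₁) (fun _ => hf₁m)).indepFun hij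
  have hindep2 : Pairwise (Function.onFun (IndepFun · · P) X2) :=
    fun i j hij => (hiid.comp (fun _ => f₂) (fun _ => hf₂c.measurable)).indepFun hij
  have hident1 : ∀ i, IdentDistrib (X1 i) (X1 0) P P := fun i => (hZident i).comp hf₁m
  have hident2 : ∀ i, IdentDistrib (X2 i) (X2 0) P P := fun i => (hZident i).comp hf₂c.measurable
  have hsl1 := strong_law_ae_real X1 hint1 hindep1 hident1
  have hsl2 := strong_law_ae_real X2 hint2 hindep2 hident2
  -- the key expectation identity
  have hEeq : ∫ ω, X1 0 ω ∂P = ∫ ω, X2 0 ω ∂P :=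
    exp_identity P (T 0) (C 0) (hT 0) (hC 0) (hTC 0) G hGc hGm hG0 hsurvG t
  have hV₁G : V₁ = ∫ ω, X2 0 ω ∂P := by
    rw [hV₁]
    refine integral_congr_ae (Eventually.of_forall fun ω => ?_)
    simp only [hX2def, hf₂def]
    exact (hGeq _ (le_min ht.1.le (le_min (hTnonneg 0 ω) (hCnonneg 0 ω)))).symm
  -- the "oracle" estimator
  set M : ℕ → Ω → ℝ := fun n ω => w * ((∑ i ∈ Finset.range n, X1 i ω) / (n:ℝ))
      + (1 - w) * ((∑ i ∈ Finset.range n, X2 i ω) / (n:ℝ)) with hMdef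
  have hMmeas : ∀ k, AEStronglyMeasurable (M (nB k)) P := by
    intro k
    refine Measurable.aestronglyMeasurable ?_
    exact (((Finset.measurable_sum _ (fun i _ => hX1m i)).div_const _).const_mul w).add
      (((Finset.measurable_sum _ (fun i _ => hX2m i)).div_const _).const_mul (1 - w))
  have hMae : ∀ᵐ ω ∂P, Tendsto (fun k => M (nB k) ω) atTop (𝓝 V₁) := by
    filter_upwards [hsl1, hsl2] with ω h1 h2
    have hcomb := (h1.const_mul w).add (h2.const_mul (1 - w))
    have hlim : w * (∫ x, X1 0 x ∂P) + (1 - w) * (∫ x, X2 0 x ∂P) = V₁ := by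
      rw [hEeq, ← hV₁G]; ring
    rw [hlim] at hcomb
    exact hcomb.comp hnB
  have hM : TendstoInMeasure P (fun k => M (nB k)) atTop (fun _ => V₁) :=
    tendstoInMeasure_of_tendsto_ae hMmeas hMae
  -- conclusion
  refine tendstoInMeasure_iff_dist.mpr fun ε hε => ?_
  obtain ⟨δ, hδpos, htube⟩ := tube_lemma Θ θA hθA Λ hΛcont t (ε/4) (by positivity)
  have hsub : ∀ k, {ω | ε ≤ dist ((nB k : ℝ)⁻¹ *
        (w * (∑ i ∈ Finset.range (nB k), if T i ω ≤ min t (C i ω) then (1 : ℝ) else 0)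
          + (1 - w) *
            ∑ i ∈ Finset.range (nB k), Λ (θhat (nA k) ω) (min t (min (T i ω) (C i ω))))) V₁}
      ⊆ {ω | ε/2 ≤ dist (M (nB k) ω) V₁} ∪ {ω | δ ≤ dist (θhat (nA k) ω) θA} := by
    intro k ω hω
    simp only [mem_setOf_eq] at hω
    by_contra hcon
    rw [mem_union] at hcon
    push_neg at hcon
    simp only [mem_setOf_eq, not_le] at hcon
    obtain ⟨hc1, hc2⟩ := hcon
    set A1 := ∑ i ∈ Finset.range (nB k), (if T i ω ≤ min t (C i ω) then (1:ℝ) else 0) with hA1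
    set B1 := ∑ i ∈ Finset.range (nB k), Λ (θhat (nA k) ω) (min t (min (T i ω) (C i ω))) with hB1
    set B2 := ∑ i ∈ Finset.range (nB k), X2 i ω with hB2
    have hA1X : A1 = ∑ i ∈ Finset.range (nB k), X1 i ω := rfl
    have hterm : ∀ i, |Λ (θhat (nA k) ω) (min t (min (T i ω) (C i ω))) - X2 i ω| ≤ ε/4 := by
      intro i
      have hmem : min t (min (T i ω) (C i ω)) ∈ Icc (0:ℝ) t :=
        ⟨le_min ht.1.le (le_min (hTnonneg i ω) (hCnonneg i ω)), min_le_left _ _⟩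
      have hX2v : X2 i ω = Λ θA (min t (min (T i ω) (C i ω))) := by
        simp only [hX2def, hf₂def]
        exact hGeq _ hmem.1
      rw [hX2v]
      exact htube _ (hθhatΘ _ ω) hc2 _ hmem
    have hsum : |B1 - B2| ≤ (nB k : ℝ) * (ε/4) := by
      rw [hB1, hB2, ← Finset.sum_sub_distrib]
      calc |∑ i ∈ Finset.range (nB k),
              (Λ (θhat (nA k) ω) (min t (min (T i ω) (C i ω))) - X2 i ω)|
          ≤ ∑ i ∈ Finset.range (nB k),
              |Λ (θhat (nA k) ω) (min t (min (T i ω) (C i ω))) - X2 i ω| :=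
            Finset.abs_sum_le_sum_abs _ _
        _ ≤ ∑ _i ∈ Finset.range (nB k), (ε/4) := Finset.sum_le_sum fun i _ => hterm i
        _ = (nB k : ℝ) * (ε/4) := by
            rw [Finset.sum_const, Finset.card_range, nsmul_eq_mul]
    have hinv : (nB k : ℝ)⁻¹ * (nB k : ℝ) ≤ 1 := by
      rcases Nat.eq_zero_or_pos (nB k) with h | h
      · simp [h]
      · rw [inv_mul_cancel₀ (by exact_mod_cast h.ne')]
    have hw1 : (0:ℝ) ≤ 1 - w := by linarith [hw.2]
    have hrep : (nB k : ℝ)⁻¹ * (w * A1 + (1 - w) * B1) - M (nB k) ω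
        = (nB k : ℝ)⁻¹ * ((1 - w) * (B1 - B2)) := by
      simp only [hMdef, hA1X, hB2, div_eq_mul_inv]
      ring
    have hDM : dist ((nB k : ℝ)⁻¹ * (w * A1 + (1 - w) * B1)) (M (nB k) ω) ≤ ε/4 := by
      rw [Real.dist_eq, hrep, abs_mul, abs_mul]
      rw [abs_of_nonneg (inv_nonneg.mpr (Nat.cast_nonneg _)), abs_of_nonneg hw1]
      calc (nB k : ℝ)⁻¹ * ((1 - w) * |B1 - B2|)
          ≤ (nB k : ℝ)⁻¹ * (1 * ((nB k : ℝ) * (ε/4))) := by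
            refine mul_le_mul_of_nonneg_left ?_ (inv_nonneg.mpr (Nat.cast_nonneg _))
            exact mul_le_mul (by linarith [hw.1]) hsum (abs_nonneg _) zero_le_one
        _ = ((nB k : ℝ)⁻¹ * (nB k : ℝ)) * (ε/4) := by ring
        _ ≤ 1 * (ε/4) := mul_le_mul_of_nonneg_right hinv (by positivity)
        _ = ε/4 := one_mul _
    have htri := dist_triangle ((nB k : ℝ)⁻¹ * (w * A1 + (1 - w) * B1)) (M (nB k) ω) V₁
    linarith [hDM, hc1, htri, hω]
  have hA := tendstoInMeasure_iff_dist.mp hM (ε/2) (half_pos hε)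
  have hB' := (tendstoInMeasure_iff_dist.mp hθhatprob δ hδpos).comp hnA
  refine tendsto_of_tendsto_of_tendsto_of_le_of_le tendsto_const_nhds
    (by simpa using hA.add hB') (fun k => zero_le)
    (fun k => (measure_mono (hsub k)).trans (measure_union_le _ _))
end

section
/- Fix t ∈ (0, t_max]. Assume the survival model, that the gradient ∇_θΛ exists and is jointly continuous on Θ × [0,t_max] with each component s ↦ ∂Λ/∂θ_j(θ,s) monotone for every θ and ‖∇_θΛ(θ,s)‖ uniformly bounded on Θ × [0,t_max], that θ̂^{(m)} → θ_A in probability with (θ̂^{(m)}) independent of the group-B data, and that (Σ̂_k)_{k≥1} is a sequence of random q×q matrices with Σ̂_k → Σ in probability for a fixed q×q matrix Σ. Then, in the asymptotic regime, the estimated additional variance V̂₂(t) := π_k · ḡ_kᵀ Σ̂_k ḡ_k, with ḡ_k := (1/n_B(k)) ∑_{i=1}^{n_B(k)} ∇_θΛ(θ̂_A, min(t, X_{B,i})) and π_k := n_B(k)/n_A(k), converges in probability, as k → ∞, to V₂(t) = π · E[∇_θΛ(θ_A, min(t,X_{B,1}))]ᵀ Σ E[∇_θΛ(θ_A, min(t,X_{B,1}))].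 -/
open MeasureTheory ProbabilityTheory Filter Topology Set

/-- If finitely many real-valued coordinate processes converge in measure to constants,
then any function continuous at the limit vector converges in measure to its value there. -/
lemma tendstoInMeasure_comp_continuousAt {Ω : Type*} [MeasurableSpace Ω]
    (P : Measure Ω) {ι : Type*} [Fintype ι]
    {f : ℕ → Ω → ι → ℝ} {c : ι → ℝ}
    (hf : ∀ i, TendstoInMeasure P (fun k ω => f k ω i) atTop (fun _ => c i))
    {g : (ι → ℝ) → ℝ} (hg : ContinuousAt g c) :
    TendstoInMeasure P (fun k ω => g (f k ω)) atTop (fun _ => g c) := by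
  rw [tendstoInMeasure_iff_dist]
  intro ε hε
  obtain ⟨δ, hδ, hgd⟩ := Metric.continuousAt_iff.mp hg ε hε
  have hle : ∀ k, P {ω | ε ≤ dist (g (f k ω)) (g c)}
      ≤ ∑ i, P {ω | δ ≤ dist (f k ω i) (c i)} := by
    intro k
    have hsub : {ω | ε ≤ dist (g (f k ω)) (g c)}
        ⊆ ⋃ i, {ω | δ ≤ dist (f k ω i) (c i)} := by
      intro ω hω
      by_contra h
      simp only [mem_iUnion, mem_setOf_eq, not_exists, not_le] at h
      exact absurd (hgd ((dist_pi_lt_iff hδ).mpr h)) (not_lt.mpr hω)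
    exact (measure_mono hsub).trans ((measure_iUnion_le _).trans_eq (tsum_fintype _))
  have hsum : Tendsto (fun k => ∑ i, P {ω | δ ≤ dist (f k ω i) (c i)}) atTop (𝓝 0) := by
    have := tendsto_finset_sum (Finset.univ : Finset ι)
      (fun i _ => tendstoInMeasure_iff_dist.mp (hf i) δ hδ)
    simpa using this
  exact tendsto_of_tendsto_of_tendsto_of_le_of_le' tendsto_const_nhds hsum
    (Eventually.of_forall fun k => zero_le) (Eventually.of_forall hle)

/-- Under the parametric survival model, joint continuity, componentwise
monotonicity (in `s`) and uniform boundedness of the gradient `∇_θΛ` on `Θ × [0,tmax]`,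
consistency of the estimator sequence (independent of the group-B data), and entrywise
consistency `Σ̂_k → Σ` in probability, the estimated additional variance
`V̂₂(t) = (n_B(k)/n_A(k)) · ḡ_kᵀ Σ̂_k ḡ_k` converges in probability to
`V₂(t) = π · E[∇_θΛ(θ_A, min(t,X₁))]ᵀ Σ E[∇_θΛ(θ_A, min(t,X₁))]`. -/
theorem stmt8 {q : ℕ}
    -- survival model
    (Θ : Set (Fin q → ℝ)) (hΘopen : IsOpen Θ) (θA : Fin q → ℝ) (hθA : θA ∈ Θ)
    (Λ : (Fin q → ℝ) → ℝ → ℝ)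
    (hΛcont : ContinuousOn (fun p : (Fin q → ℝ) × ℝ => Λ p.1 p.2) (Θ ×ˢ Ici 0))
    (hΛ0 : ∀ θ ∈ Θ, Λ θ 0 = 0)
    (hΛmono : ∀ θ ∈ Θ, MonotoneOn (Λ θ) (Ici 0))
    (hΛnonneg : ∀ θ ∈ Θ, ∀ s ∈ Ici (0 : ℝ), 0 ≤ Λ θ s)
    (tmax : ℝ) (htmax : 0 < tmax)
    {Ω : Type*} [MeasurableSpace Ω] (P : Measure Ω) [IsProbabilityMeasure P]
    (T C : ℕ → Ω → ℝ)
    (hT : ∀ i, Measurable (T i)) (hC : ∀ i, Measurable (C i))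
    (hTnonneg : ∀ i ω, 0 ≤ T i ω) (hCnonneg : ∀ i ω, 0 ≤ C i ω)
    (hiid : iIndepFun (fun i ω => (T i ω, C i ω)) P)
    (hident : ∀ i, P.map (fun ω => (T i ω, C i ω)) = P.map (fun ω => (T 0 ω, C 0 ω)))
    (hTC : ∀ i, IndepFun (T i) (C i) P)
    (hsurv : ∀ i, ∀ s ∈ Ici (0 : ℝ),
      P {ω | s < T i ω} = ENNReal.ofReal (Real.exp (-(Λ θA s))))
    (hXle : ∀ i, ∀ᵐ ω ∂P, min (T i ω) (C i ω) ≤ tmax)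
    -- the fixed time point
    (t : ℝ) (ht : t ∈ Ioc 0 tmax)
    -- gradient assumptions
    (gradΛ : (Fin q → ℝ) → ℝ → (Fin q → ℝ))
    (hgrad : ∀ θ ∈ Θ, ∀ s ∈ Icc 0 tmax,
      HasFDerivAt (fun θ' => Λ θ' s)
        (∑ j, gradΛ θ s j • (ContinuousLinearMap.proj j : (Fin q → ℝ) →L[ℝ] ℝ)) θ)
    (hgradcont : ContinuousOn (fun p : (Fin q → ℝ) × ℝ => gradΛ p.1 p.2) (Θ ×ˢ Icc 0 tmax))
    (hgradmono : ∀ θ ∈ Θ, ∀ j : Fin q,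
      MonotoneOn (fun s => gradΛ θ s j) (Icc 0 tmax)
        ∨ AntitoneOn (fun s => gradΛ θ s j) (Icc 0 tmax))
    (Cg : ℝ) (hgradbdd : ∀ θ ∈ Θ, ∀ s ∈ Icc 0 tmax, ‖gradΛ θ s‖ ≤ Cg)
    -- estimator assumptions
    (θhat : ℕ → Ω → (Fin q → ℝ))
    (hθhatmeas : ∀ m, Measurable (θhat m))
    (hθhatΘ : ∀ m ω, θhat m ω ∈ Θ)
    (hθhatindep : IndepFun (fun ω => fun m => θhat m ω) (fun ω => fun i => (T i ω, C i ω)) P)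
    (hθhatprob : TendstoInMeasure P θhat atTop (fun _ => θA))
    -- covariance matrix estimators
    (Sig : Matrix (Fin q) (Fin q) ℝ)
    (Sighat : ℕ → Ω → Matrix (Fin q) (Fin q) ℝ)
    (hSighatmeas : ∀ k i j, Measurable (fun ω => Sighat k ω i j))
    (hSighatprob : ∀ i j,
      TendstoInMeasure P (fun k ω => Sighat k ω i j) atTop (fun _ => Sig i j))
    -- asymptotic regime
    (nA nB : ℕ → ℕ) (hnA : Tendsto nA atTop atTop) (hnB : Tendsto nB atTop atTop)
    (π : ℝ) (hπ : 0 < π)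
    (hratio : Tendsto (fun k => (nB k : ℝ) / (nA k : ℝ)) atTop (𝓝 π))
    -- the limiting additional variance
    (V₂ : ℝ)
    (hV₂ : V₂ = π * dotProduct
        (fun j => ∫ ω, gradΛ θA (min t (min (T 0 ω) (C 0 ω))) j ∂P)
        (Sig.mulVec (fun j => ∫ ω, gradΛ θA (min t (min (T 0 ω) (C 0 ω))) j ∂P))) :
    TendstoInMeasure P
      (fun k ω => ((nB k : ℝ) / (nA k : ℝ)) * dotProduct
        (fun j => (nB k : ℝ)⁻¹ *
          ∑ i ∈ Finset.range (nB k), gradΛ (θhat (nA k) ω) (min t (min (T i ω) (C i ω))) j)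
        ((Sighat k ω).mulVec
          (fun j => (nB k : ℝ)⁻¹ *
            ∑ i ∈ Finset.range (nB k),
              gradΛ (θhat (nA k) ω) (min t (min (T i ω) (C i ω))) j)))
      atTop (fun _ => V₂) := by
  classical
  -- observed (capped) times
  set X : ℕ → Ω → ℝ := fun i ω => min t (min (T i ω) (C i ω)) with hXdef
  have hXmem : ∀ i ω, X i ω ∈ Icc (0:ℝ) tmax := fun i ω =>
    ⟨le_min ht.1.le (le_min (hTnonneg i ω) (hCnonneg i ω)), (min_le_left _ _).trans ht.2⟩
  have hXmeas : ∀ i, Measurable (X i) := fun i => measurable_const.min ((hT i).min (hC i))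
  -- continuous extension of `s ↦ gradΛ θA s` to all of `ℝ`
  set clamp : ℝ → ℝ := fun s => max 0 (min s tmax) with hclampdef
  have hclampcont : Continuous clamp := continuous_const.max (continuous_id.min continuous_const)
  have hclampmem : ∀ s, clamp s ∈ Icc (0:ℝ) tmax := fun s =>
    ⟨le_max_left _ _, max_le htmax.le (min_le_right _ _)⟩
  have hclampid : ∀ s ∈ Icc (0:ℝ) tmax, clamp s = s := fun s hs => by
    simp only [hclampdef]; rw [min_eq_left hs.2, max_eq_right hs.1]
  have hslice : ContinuousOn (fun s => gradΛ θA s) (Icc 0 tmax) := by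
    have hmap : MapsTo (fun s : ℝ => ((θA, s) : (Fin q → ℝ) × ℝ)) (Icc 0 tmax) (Θ ×ˢ Icc 0 tmax) :=
      fun s hs => ⟨hθA, hs⟩
    exact hgradcont.comp (Continuous.continuousOn (by continuity)) hmap
  set G : ℝ → (Fin q → ℝ) := fun s => gradΛ θA (clamp s) with hGdef
  have hGcont : Continuous G :=
    hslice.comp_continuous hclampcont hclampmem
  have hGeq : ∀ s ∈ Icc (0:ℝ) tmax, G s = gradΛ θA s := fun s hs => by
    rw [hGdef]; simp only []; rw [hclampid s hs]
  -- the i.i.d. summands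
  set Y : Fin q → ℕ → Ω → ℝ := fun j i ω => gradΛ θA (X i ω) j with hYdef
  have hYeq : ∀ j i, Y j i = fun ω => G (min t (min (T i ω) (C i ω))) j := fun j i => by
    funext ω
    rw [hYdef]; simp only []
    rw [hGeq _ (hXmem i ω)]
  have hYmeas : ∀ j i, Measurable (Y j i) := by
    intro j i
    rw [hYeq]
    exact ((continuous_apply j).comp hGcont).measurable.comp (hXmeas i)
  have hYbdd : ∀ j i ω, ‖Y j i ω‖ ≤ Cg := by
    intro j i ω
    exact (norm_le_pi_norm (gradΛ θA (X i ω)) j).trans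
      (hgradbdd θA hθA _ (hXmem i ω))
  -- pairwise independence and identical distribution
  have hpairmeas : ∀ i, Measurable (fun ω => (T i ω, C i ω)) := fun i => (hT i).prodMk (hC i)
  have hFmeas : ∀ j : Fin q, Measurable (fun p : ℝ × ℝ => G (min t (min p.1 p.2)) j) := by
    intro j
    exact ((continuous_apply j).comp hGcont).measurable.comp
      (measurable_const.min (measurable_fst.min measurable_snd))
  have hYindep : ∀ j : Fin q, Pairwise (Function.onFun (IndepFun · · P) (Y j)) := by
    intro j
    have := hiid.comp (fun _ => fun p : ℝ × ℝ => G (min t (min p.1 p.2)) j) (fun _ => hFmeas j)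
    intro i i' hii'
    have h2 := this.indepFun hii'
    simp only [Function.onFun]
    rw [hYeq j i, hYeq j i']
    exact h2
  have hYident : ∀ j : Fin q, ∀ i, IdentDistrib (Y j i) (Y j 0) P P := by
    intro j i
    refine ⟨(hYmeas j i).aemeasurable, (hYmeas j 0).aemeasurable, ?_⟩
    rw [hYeq j i, hYeq j 0]
    have h1 : ∀ i', P.map (fun ω => G (min t (min (T i' ω) (C i' ω))) j)
        = (P.map (fun ω => (T i' ω, C i' ω))).map (fun p : ℝ × ℝ => G (min t (min p.1 p.2)) j) := by
      intro i'
      rw [Measure.map_map (hFmeas j) (hpairmeas i')]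
      rfl
    rw [h1 i, h1 0, hident i]
  have hYint : ∀ j : Fin q, Integrable (Y j 0) P := by
    intro j
    exact (integrable_const Cg).mono' (hYmeas j 0).aestronglyMeasurable
      (Eventually.of_forall fun ω => hYbdd j 0 ω)
  -- strong law of large numbers, composed with `nB`
  have hSLLN : ∀ j : Fin q, ∀ᵐ ω ∂P, Tendsto
      (fun k => (nB k : ℝ)⁻¹ * ∑ i ∈ Finset.range (nB k), Y j i ω) atTop
      (𝓝 (∫ ω, Y j 0 ω ∂P)) := by
    intro j
    filter_upwards [strong_law_ae_real (Y j) (hYint j) (hYindep j) (hYident j)] with ω hω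
    have := hω.comp hnB
    refine this.congr fun k => ?_
    simp [div_eq_inv_mul]
  -- the empirical averages at the true parameter converge in measure
  set A : Fin q → ℕ → Ω → ℝ :=
    fun j k ω => (nB k : ℝ)⁻¹ * ∑ i ∈ Finset.range (nB k), Y j i ω with hAdef
  have hAmeas : ∀ j k, AEStronglyMeasurable (A j k) P := by
    intro j k
    exact (Measurable.const_mul (Finset.measurable_sum _ (fun i _ => hYmeas j i)) _).aestronglyMeasurable
  have hAtim : ∀ j : Fin q, TendstoInMeasure P (fun k ω => A j k ω)
      atTop (fun _ => ∫ ω, Y j 0 ω ∂P) := by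
    intro j
    exact tendstoInMeasure_of_tendsto_ae (hAmeas j) (hSLLN j)
  -- the empirical average with the estimated parameter
  set gbar : ℕ → Ω → Fin q → ℝ := fun k ω j =>
    (nB k : ℝ)⁻¹ * ∑ i ∈ Finset.range (nB k), gradΛ (θhat (nA k) ω) (X i ω) j with hgbardef
  -- uniform continuity setup
  obtain ⟨ρ, hρ, hball⟩ := Metric.isOpen_iff.mp hΘopen θA hθA
  have hcb : Metric.closedBall θA (ρ/2) ⊆ Θ :=
    (Metric.closedBall_subset_ball (by linarith)).trans hball
  have hKcomp : IsCompact (Metric.closedBall θA (ρ/2) ×ˢ Icc (0:ℝ) tmax) :=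
    (isCompact_closedBall _ _).prod isCompact_Icc
  have hKsub : Metric.closedBall θA (ρ/2) ×ˢ Icc (0:ℝ) tmax ⊆ Θ ×ˢ Icc 0 tmax :=
    prod_mono hcb subset_rfl
  have hUC : UniformContinuousOn (fun p : (Fin q → ℝ) × ℝ => gradΛ p.1 p.2)
      (Metric.closedBall θA (ρ/2) ×ˢ Icc (0:ℝ) tmax) :=
    hKcomp.uniformContinuousOn_of_continuous (hgradcont.mono hKsub)
  -- the error term tends to zero in measure
  have hEtim : ∀ j : Fin q, TendstoInMeasure P
      (fun k ω => gbar k ω j - A j k ω) atTop (fun _ => (0:ℝ)) := by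
    intro j
    rw [tendstoInMeasure_iff_dist]
    intro ε hε
    obtain ⟨δ, hδ, hH⟩ := Metric.uniformContinuousOn_iff.mp hUC (ε/2) (half_pos hε)
    set δ' : ℝ := min δ (ρ/2) with hδ'def
    have hδ' : 0 < δ' := lt_min hδ (by linarith)
    have hsub : ∀ k, {ω | ε ≤ dist (gbar k ω j - A j k ω) 0}
        ⊆ {ω | δ' ≤ dist (θhat (nA k) ω) θA} := by
      intro k ω hω
      simp only [mem_setOf_eq] at hω
      by_contra hcon
      simp only [mem_setOf_eq, not_le] at hcon
      refine absurd hω (not_le.mpr ?_)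
      have hθb : θhat (nA k) ω ∈ Metric.closedBall θA (ρ/2) :=
        Metric.mem_closedBall.mpr (le_of_lt (lt_of_lt_of_le hcon (min_le_right _ _)))
      have hterm : ∀ i, |gradΛ (θhat (nA k) ω) (X i ω) j - Y j i ω| ≤ ε/2 := by
        intro i
        have hp : ((θhat (nA k) ω, X i ω) : (Fin q → ℝ) × ℝ)
            ∈ Metric.closedBall θA (ρ/2) ×ˢ Icc (0:ℝ) tmax := ⟨hθb, hXmem i ω⟩
        have hq : ((θA, X i ω) : (Fin q → ℝ) × ℝ)
            ∈ Metric.closedBall θA (ρ/2) ×ˢ Icc (0:ℝ) tmax :=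
          ⟨Metric.mem_closedBall_self (by linarith), hXmem i ω⟩
        have hdpq : dist ((θhat (nA k) ω, X i ω) : (Fin q → ℝ) × ℝ) (θA, X i ω) < δ := by
          rw [Prod.dist_eq]
          simp only [dist_self]
          exact max_lt (lt_of_lt_of_le hcon (min_le_left _ _)) hδ
        have := hH _ hp _ hq hdpq
        have hcoord : dist (gradΛ (θhat (nA k) ω) (X i ω) j) (gradΛ θA (X i ω) j)
            ≤ dist (gradΛ (θhat (nA k) ω) (X i ω)) (gradΛ θA (X i ω)) :=
          dist_le_pi_dist _ _ j
        rw [hYdef]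
        simp only []
        rw [← Real.dist_eq]
        exact (hcoord.trans this.le)
      have hdiff : gbar k ω j - A j k ω
          = (nB k : ℝ)⁻¹ * ∑ i ∈ Finset.range (nB k), (gradΛ (θhat (nA k) ω) (X i ω) j - Y j i ω) := by
        rw [hgbardef, hAdef]
        simp only []
        rw [Finset.sum_sub_distrib, mul_sub]
      rw [Real.dist_eq, sub_zero, hdiff, abs_mul, abs_inv, Nat.abs_cast]
      have hsum : |∑ i ∈ Finset.range (nB k), (gradΛ (θhat (nA k) ω) (X i ω) j - Y j i ω)|
          ≤ (nB k : ℝ) * (ε/2) := by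
        refine (Finset.abs_sum_le_sum_abs _ _).trans ?_
        calc ∑ i ∈ Finset.range (nB k), |gradΛ (θhat (nA k) ω) (X i ω) j - Y j i ω|
            ≤ ∑ _i ∈ Finset.range (nB k), (ε/2) := Finset.sum_le_sum fun i _ => hterm i
          _ = (nB k : ℝ) * (ε/2) := by simp [mul_comm]
      calc (nB k : ℝ)⁻¹ * |∑ i ∈ Finset.range (nB k), (gradΛ (θhat (nA k) ω) (X i ω) j - Y j i ω)|
          ≤ (nB k : ℝ)⁻¹ * ((nB k : ℝ) * (ε/2)) := by
            exact mul_le_mul_of_nonneg_left hsum (by positivity)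
        _ ≤ ε/2 := by
            rcases Nat.eq_zero_or_pos (nB k) with h0 | hpos
            · simp [h0]; positivity
            · rw [← mul_assoc, inv_mul_cancel₀ (by positivity : (nB k : ℝ) ≠ 0), one_mul]
        _ < ε := by linarith
    have hθtend : Tendsto (fun k => P {ω | δ' ≤ dist (θhat (nA k) ω) θA}) atTop (𝓝 0) := by
      have := (tendstoInMeasure_iff_dist.mp hθhatprob δ' hδ').comp hnA
      exact this
    refine tendsto_of_tendsto_of_tendsto_of_le_of_le' tendsto_const_nhds hθtend
      (Eventually.of_forall fun k => zero_le)
      (Eventually.of_forall fun k => measure_mono (hsub k))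
  -- deterministic ratio coordinate
  have hπtim : TendstoInMeasure P (fun k (_ : Ω) => (nB k : ℝ) / (nA k : ℝ)) atTop
      (fun _ => π) := by
    rw [tendstoInMeasure_iff_dist]
    intro ε hε
    have heq : (fun _ : ℕ => (0:ENNReal)) =ᶠ[atTop]
        fun k => P {ω : Ω | ε ≤ dist ((nB k : ℝ)/(nA k : ℝ)) π} := by
      filter_upwards [Metric.tendsto_nhds.mp hratio ε hε] with k hk
      have hemp : {ω : Ω | ε ≤ dist ((nB k : ℝ)/(nA k : ℝ)) π} = ∅ :=
        eq_empty_iff_forall_notMem.mpr fun ω hω => absurd hk (not_lt.mpr hω)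
      rw [hemp, measure_empty]
    exact Tendsto.congr' heq tendsto_const_nhds
  -- assembling everything through a continuous function of finitely many coordinates
  set ι : Type := (Fin q ⊕ Fin q) ⊕ ((Fin q × Fin q) ⊕ Unit) with hιdef
  set μv : Fin q → ℝ := fun j => ∫ ω, Y j 0 ω ∂P with hμvdef
  set F : ℕ → Ω → ι → ℝ := fun k ω => Sum.elim
      (Sum.elim (fun j => A j k ω) (fun j => gbar k ω j - A j k ω))
      (Sum.elim (fun p : Fin q × Fin q => Sighat k ω p.1 p.2)
        (fun _ => (nB k : ℝ) / (nA k : ℝ))) with hFdef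
  set c : ι → ℝ := Sum.elim (Sum.elim μv (fun _ => 0))
      (Sum.elim (fun p : Fin q × Fin q => Sig p.1 p.2) (fun _ => π)) with hcdef
  set g : (ι → ℝ) → ℝ := fun x => x (Sum.inr (Sum.inr ())) *
      ∑ j : Fin q, (x (Sum.inl (Sum.inl j)) + x (Sum.inl (Sum.inr j))) *
        ∑ i : Fin q, x (Sum.inr (Sum.inl (j, i))) *
          (x (Sum.inl (Sum.inl i)) + x (Sum.inl (Sum.inr i))) with hgdef
  have hgcont : Continuous g := by
    rw [hgdef]
    exact Continuous.mul (continuous_apply _)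
      (continuous_finset_sum _ fun j _ => Continuous.mul
        ((continuous_apply _).add (continuous_apply _))
        (continuous_finset_sum _ fun i _ => Continuous.mul (continuous_apply _)
          ((continuous_apply _).add (continuous_apply _))))
  have hcoord : ∀ x : ι, TendstoInMeasure P (fun k ω => F k ω x) atTop (fun _ => c x) := by
    rintro ((j | j) | (⟨j, i⟩ | ⟨⟩)) <;>
      simp only [hFdef, hcdef, Sum.elim_inl, Sum.elim_inr]
    · exact hAtim j
    · exact hEtim j
    · exact hSighatprob j i
    · exact hπtim
  have key := tendstoInMeasure_comp_continuousAt P hcoord hgcont.continuousAt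
  have hcanc : ∀ a b : ℝ, a + (b - a) = b := fun a b => by ring
  have h2 : g c = V₂ := by
    rw [hV₂]
    simp only [hgdef, hcdef, Sum.elim_inl, Sum.elim_inr, add_zero,
      dotProduct, Matrix.mulVec, hμvdef, hYdef]
  refine TendstoInMeasure.congr (fun k => Eventually.of_forall fun ω => ?_)
    (Eventually.of_forall fun ω => h2) key
  simp only [hFdef, hgdef, Sum.elim_inl, Sum.elim_inr, hcanc, hgbardef, hAdef,
    dotProduct, Matrix.mulVec]
  rfl
end

section
/- Let T and C be independent nonnegative real random variables, let Λ : [0,∞) → [0,∞) be continuous and nondecreasing with Λ(0) = 0 and P[T > s] = exp(−Λ(s)) for all s ≥ 0, and set X = min(T, C). Then for every t ≥ 0, E[( 1(T ≤ min(t,C)) − Λ(min(t, X)) )²] = E[Λ(min(t, X))]; in particular, the compensated single-observation counting variable 1(T ≤ min(t,C)) − Λ(min(t,X)) has mean 0 and variance E[Λ(min(t,X))]. -/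
open MeasureTheory ProbabilityTheory Filter Topology Set

set_option linter.unusedSectionVars false

lemma intExp {lam : ℝ} : ∫ t in (0:ℝ)..lam, Real.exp (-t) = 1 - Real.exp (-lam) := by
  have := intervalIntegral.integral_comp_neg (a := (0:ℝ)) (b := lam) (fun t => Real.exp t)
  rw [this, neg_zero, integral_exp, Real.exp_zero]

lemma intTExp {lam : ℝ} :
    ∫ t in (0:ℝ)..lam, Real.exp (-t) * (2 * t)
      = 2 - 2 * Real.exp (-lam) - 2 * lam * Real.exp (-lam) := by
  have hderiv : ∀ t ∈ uIcc (0:ℝ) lam,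
      HasDerivAt (fun t : ℝ => (-2 * (t + 1)) * Real.exp (-t)) (Real.exp (-t) * (2 * t)) t := by
    intro t _
    have h1 : HasDerivAt (fun t : ℝ => -2 * (t + 1)) (-2) t := by
      simpa using ((hasDerivAt_id t).add_const 1).const_mul (-2)
    have h2 : HasDerivAt (fun t : ℝ => Real.exp (-t)) (-Real.exp (-t)) t := by
      simpa using (hasDerivAt_neg t).exp
    have : HasDerivAt (fun t : ℝ => (-2 * (t + 1)) * Real.exp (-t)) _ t := h1.mul h2
    convert this using 1
    ring
  have hint : IntervalIntegrable (fun t => Real.exp (-t) * (2 * t)) volume 0 lam :=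
    (Continuous.mul (Real.continuous_exp.comp continuous_neg)
      (continuous_const.mul continuous_id)).intervalIntegrable _ _
  rw [intervalIntegral.integral_eq_sub_of_hasDerivAt hderiv hint]
  simp [Real.exp_zero]
  ring

section aux

variable {μ : Measure ℝ} [IsProbabilityMeasure μ] {Λ' : ℝ → ℝ}

lemma lam_nonneg (hm : Monotone Λ') (h0 : ∀ s, s ≤ 0 → Λ' s = 0) (s : ℝ) : 0 ≤ Λ' s := by
  rcases le_total s 0 with h | h
  · simp [h0 s h]
  · rw [← h0 0 le_rfl]; exact hm h

lemma tail_set_eq_empty (hm : Monotone Λ') {u x : ℝ} (hxu : Λ' u ≤ x) :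
    {a : ℝ | x < Λ' (min a u)} = ∅ := by
  ext a
  simp only [mem_setOf_eq, mem_empty_iff_false, iff_false, not_lt]
  exact (hm (min_le_right a u)).trans hxu

lemma tail_eq (hc : Continuous Λ') (hm : Monotone Λ')
    (h0 : ∀ s, s ≤ 0 → Λ' s = 0)
    (hs : ∀ s, 0 ≤ s → μ (Ioi s) = ENNReal.ofReal (Real.exp (-Λ' s)))
    {u x : ℝ} (hu : 0 ≤ u) (hx : 0 ≤ x) (hxu : x < Λ' u) :
    μ {a | x < Λ' (min a u)} = ENNReal.ofReal (Real.exp (-x)) := by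
  set S : Set ℝ := Icc 0 u ∩ Λ' ⁻¹' (Iic x) with hS
  have hne : S.Nonempty := ⟨0, ⟨le_rfl, hu⟩, by simp [h0 0 le_rfl, hx]⟩
  have hbdd : BddAbove S := ⟨u, fun s hs => hs.1.2⟩
  have hclosed : IsClosed S := isClosed_Icc.inter (isClosed_Iic.preimage hc)
  have hmem : sSup S ∈ S := hclosed.csSup_mem hne hbdd
  set m := sSup S with hmdef
  have hmu : m ≤ u := hmem.1.2
  have hm0 : 0 ≤ m := hmem.1.1
  have hΛm_le : Λ' m ≤ x := hmem.2
  have hΛm : Λ' m = x := by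
    by_contra h
    have hlt : Λ' m < x := lt_of_le_of_ne hΛm_le h
    have hmu' : m < u := by
      rcases lt_or_eq_of_le hmu with h' | h'
      · exact h'
      · exact absurd hxu (not_lt.mpr (h' ▸ hΛm_le))
    have hopen : IsOpen (Λ' ⁻¹' Iio x) := isOpen_Iio.preimage hc
    rcases Metric.isOpen_iff.mp hopen m hlt with ⟨ε, hε, hball⟩
    set s := min u (m + ε / 2) with hsdef
    have hsm : m < s := lt_min hmu' (by linarith)
    have hsS : s ∈ S := by
      constructor
      · exact ⟨hm0.trans hsm.le, min_le_left _ _⟩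
      · have : s ∈ Metric.ball m ε := by
          rw [Metric.mem_ball, Real.dist_eq, abs_of_pos (by linarith)]
          have : s ≤ m + ε / 2 := min_le_right _ _
          linarith
        have h2 : Λ' s < x := hball this
        exact le_of_lt h2
    exact absurd (le_csSup hbdd hsS) (not_le.mpr hsm)
  have hset : {a : ℝ | x < Λ' (min a u)} = Ioi m := by
    ext a
    simp only [mem_setOf_eq, mem_Ioi]
    constructor
    · intro h
      by_contra h'
      push_neg at h'
      have : min a u = a := min_eq_left (h'.trans hmu)
      rw [this] at h
      exact absurd (hm h') (not_le.mpr (hΛm ▸ h))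
    · intro h
      rcases le_total u a with h' | h'
      · rw [min_eq_right h']; exact hxu
      · rw [min_eq_left h']
        by_contra h''
        push_neg at h''
        have : a ∈ S := ⟨⟨hm0.trans h.le, h'⟩, h''⟩
        exact absurd (le_csSup hbdd this) (not_le.mpr h)
  rw [hset, hs m hm0, hΛm]

lemma tail_measure (hc : Continuous Λ') (hm : Monotone Λ') (h0 : ∀ s, s ≤ 0 → Λ' s = 0)
    (hs : ∀ s, 0 ≤ s → μ (Ioi s) = ENNReal.ofReal (Real.exp (-Λ' s)))
    {u : ℝ} (hu : 0 ≤ u) : ∀ t ∈ Ioi (0:ℝ), μ {a | t < Λ' (min a u)}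
      = (Ioo (0:ℝ) (Λ' u)).indicator (fun t => ENNReal.ofReal (Real.exp (-t))) t := by
  intro t ht
  rcases lt_or_ge t (Λ' u) with h | h
  · rw [indicator_of_mem (mem_Ioo.mpr ⟨mem_Ioi.mp ht, h⟩)]
    exact tail_eq hc hm h0 hs hu (le_of_lt ht) h
  · rw [indicator_of_notMem (fun hmem => absurd hmem.2 (not_lt.mpr h)),
      tail_set_eq_empty hm h, measure_empty]

lemma lint_one (hc : Continuous Λ') (hm : Monotone Λ') (h0 : ∀ s, s ≤ 0 → Λ' s = 0)
    (hs : ∀ s, 0 ≤ s → μ (Ioi s) = ENNReal.ofReal (Real.exp (-Λ' s)))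
    {u : ℝ} (hu : 0 ≤ u) :
    ∫⁻ a, ENNReal.ofReal (Λ' (min a u)) ∂μ = ENNReal.ofReal (1 - Real.exp (-Λ' u)) := by
  have hnn := lam_nonneg hm h0
  have hmble : Measurable fun a : ℝ => Λ' (min a u) :=
    hc.measurable.comp (measurable_id.min measurable_const)
  rw [lintegral_eq_lintegral_meas_lt μ (Eventually.of_forall fun a => hnn _) hmble.aemeasurable]
  rw [setLIntegral_congr_fun measurableSet_Ioi
    (tail_measure hc hm h0 hs hu)]
  rw [lintegral_indicator measurableSet_Ioo _, Measure.restrict_restrict measurableSet_Ioo,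
    inter_eq_self_of_subset_left Ioo_subset_Ioi_self]
  have hint : IntegrableOn (fun t => Real.exp (-t)) (Ioo 0 (Λ' u)) volume :=
    ((Real.continuous_exp.comp continuous_neg).integrableOn_Icc).mono_set Ioo_subset_Icc_self
  rw [← ofReal_integral_eq_lintegral_ofReal hint
    (Eventually.of_forall fun t => (Real.exp_pos _).le)]
  rw [← integral_Ioc_eq_integral_Ioo, ← intervalIntegral.integral_of_le (hnn u), intExp]

lemma lint_sq (hc : Continuous Λ') (hm : Monotone Λ') (h0 : ∀ s, s ≤ 0 → Λ' s = 0)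
    (hs : ∀ s, 0 ≤ s → μ (Ioi s) = ENNReal.ofReal (Real.exp (-Λ' s)))
    {u : ℝ} (hu : 0 ≤ u) :
    ∫⁻ a, ENNReal.ofReal ((Λ' (min a u)) ^ 2) ∂μ
      = ENNReal.ofReal (2 - 2 * Real.exp (-Λ' u) - 2 * Λ' u * Real.exp (-Λ' u)) := by
  have hnn := lam_nonneg hm h0
  have hmble : Measurable fun a : ℝ => Λ' (min a u) :=
    hc.measurable.comp (measurable_id.min measurable_const)
  have key := lintegral_comp_eq_lintegral_meas_lt_mul μ
    (f := fun a : ℝ => Λ' (min a u)) (g := fun t => 2 * t)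
    (Eventually.of_forall fun a => hnn _) hmble.aemeasurable
    (fun t _ => (continuous_const.mul continuous_id).intervalIntegrable _ _)
    (ae_restrict_of_forall_mem measurableSet_Ioi (fun t ht => by have := mem_Ioi.mp ht; positivity))
  have hLHS : ∀ a : ℝ, ∫ t in (0:ℝ)..(Λ' (min a u)), 2 * t = (Λ' (min a u)) ^ 2 := by
    intro a
    rw [intervalIntegral.integral_const_mul, integral_id]
    ring
  simp_rw [hLHS] at key
  rw [key]
  have key2 : ∀ t ∈ Ioi (0:ℝ), μ {a | t < Λ' (min a u)} * ENNReal.ofReal (2 * t)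
      = (Ioo (0:ℝ) (Λ' u)).indicator (fun t => ENNReal.ofReal (Real.exp (-t) * (2 * t))) t := by
    intro t ht
    rw [tail_measure hc hm h0 hs hu t ht]
    rcases em (t ∈ Ioo (0:ℝ) (Λ' u)) with h | h
    · rw [indicator_of_mem h, indicator_of_mem h,
        ENNReal.ofReal_mul (Real.exp_pos _).le]
    · rw [indicator_of_notMem h, indicator_of_notMem h, zero_mul]
  rw [setLIntegral_congr_fun measurableSet_Ioi key2]
  rw [lintegral_indicator measurableSet_Ioo _, Measure.restrict_restrict measurableSet_Ioo,
    inter_eq_self_of_subset_left Ioo_subset_Ioi_self]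
  have hint : IntegrableOn (fun t => Real.exp (-t) * (2 * t)) (Ioo 0 (Λ' u)) volume :=
    (((Real.continuous_exp.comp continuous_neg).mul
      (continuous_const.mul continuous_id)).integrableOn_Icc).mono_set Ioo_subset_Icc_self
  rw [← ofReal_integral_eq_lintegral_ofReal hint
    (ae_restrict_of_forall_mem measurableSet_Ioo (fun t ht => by
      have := (Real.exp_pos (-t)).le
      have := ht.1.le
      positivity))]
  rw [← integral_Ioc_eq_integral_Ioo, ← intervalIntegral.integral_of_le (hnn u), intTExp]

lemma integrable_bdd {f : ℝ → ℝ} (hf : Measurable f) (Mb : ℝ) (h : ∀ a, |f a| ≤ Mb) :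
    Integrable f μ :=
  (integrable_const Mb).mono hf.aestronglyMeasurable
    (Eventually.of_forall fun a => by
      simpa [Real.norm_eq_abs] using (h a).trans (le_abs_self Mb))

lemma key_int (hc : Continuous Λ') (hm : Monotone Λ') (h0 : ∀ s, s ≤ 0 → Λ' s = 0)
    (hs : ∀ s, 0 ≤ s → μ (Ioi s) = ENNReal.ofReal (Real.exp (-Λ' s)))
    {u : ℝ} (hu : 0 ≤ u) :
    (∫ a, ((if a ≤ u then (1:ℝ) else 0) - Λ' (min a u)) ^ 2 ∂μ
       = ∫ a, Λ' (min a u) ∂μ) ∧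
    ∫ a, ((if a ≤ u then (1:ℝ) else 0) - Λ' (min a u)) ∂μ = 0 := by
  have hnn := lam_nonneg hm h0
  set lam := Λ' u with hlamdef
  set e := Real.exp (-lam) with hedef
  have hlam0 : 0 ≤ lam := hnn u
  have he0 : 0 < e := Real.exp_pos _
  have he1 : e ≤ 1 := Real.exp_le_one_iff.mpr (by linarith)
  have hee : Real.exp lam * e = 1 := by
    rw [hedef, ← Real.exp_add]; simp
  have hq : 0 ≤ 2 - 2 * e - 2 * lam * e := by
    nlinarith [Real.add_one_le_exp lam]
  set M : ℝ → ℝ := fun a => Λ' (min a u) with hMdef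
  have hMmble : Measurable M := hc.measurable.comp (measurable_id.min measurable_const)
  have hMbd : ∀ a, |M a| ≤ lam := fun a => by
    rw [abs_of_nonneg (hnn _)]
    exact hm (min_le_right a u)
  set χ : ℝ → ℝ := fun a => if a ≤ u then (1:ℝ) else 0 with hχdef
  have hχmble : Measurable χ :=
    Measurable.ite measurableSet_Iic measurable_const measurable_const
  have hχbd : ∀ a, |χ a| ≤ 1 := fun a => by
    rw [hχdef]; dsimp only; split <;> simp
  set ι : ℝ → ℝ := fun a => if u < a then (1:ℝ) else 0 with hιdef
  have hιmble : Measurable ι :=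
    Measurable.ite measurableSet_Ioi measurable_const measurable_const
  -- integrabilities
  have hiM : Integrable M μ := integrable_bdd hMmble lam hMbd
  have hiM2 : Integrable (fun a => M a ^ 2) μ :=
    integrable_bdd (hMmble.pow_const 2) (lam ^ 2) (fun a => by
      rw [abs_pow]
      exact pow_le_pow_left₀ (abs_nonneg _) (hMbd a) 2)
  have hiχ : Integrable χ μ := integrable_bdd hχmble 1 hχbd
  have hiιM : Integrable (fun a => ι a * M a) μ :=
    integrable_bdd (hιmble.mul hMmble) lam (fun a => by
      rw [abs_mul]
      have h1 : |ι a| ≤ 1 := by rw [hιdef]; dsimp only; split <;> simp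
      calc |ι a| * |M a| ≤ 1 * lam :=
            mul_le_mul h1 (hMbd a) (abs_nonneg _) zero_le_one
        _ = lam := one_mul lam)
  -- values
  have hA : ∫ a, M a ∂μ = 1 - e := by
    rw [integral_eq_lintegral_of_nonneg_ae (Eventually.of_forall fun a => hnn _)
      hMmble.aestronglyMeasurable]
    rw [lint_one hc hm h0 hs hu, ENNReal.toReal_ofReal (by linarith)]
  have hB : ∫ a, M a ^ 2 ∂μ = 2 - 2 * e - 2 * lam * e := by
    rw [integral_eq_lintegral_of_nonneg_ae (Eventually.of_forall fun a => sq_nonneg (M a))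
      ((hMmble.pow_const 2).aestronglyMeasurable)]
    rw [lint_sq hc hm h0 hs hu, ENNReal.toReal_ofReal hq]
  have hIoi : (μ (Ioi u)).toReal = e := by
    rw [hs u hu, ENNReal.toReal_ofReal he0.le]
  have hD : ∫ a, χ a ∂μ = 1 - e := by
    have : χ = (Iic u).indicator (fun _ => (1:ℝ)) := by
      funext a
      rw [hχdef, indicator_apply]
      simp [mem_Iic]
    rw [this, integral_indicator_const _ measurableSet_Iic, measureReal_def]
    have hcompl : μ (Iic u) = 1 - μ (Ioi u) := by
      rw [← compl_Ioi, measure_compl measurableSet_Ioi (measure_ne_top μ _), measure_univ]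
    rw [hcompl, hs u hu, ← ENNReal.ofReal_one,
      ← ENNReal.ofReal_sub _ he0.le, ENNReal.toReal_ofReal (by linarith)]
    simp
  have hE : ∫ a, ι a * M a ∂μ = lam * e := by
    have : (fun a => ι a * M a) = (Ioi u).indicator (fun _ => lam) := by
      funext a
      rw [hιdef, hMdef, indicator_apply]
      simp only [mem_Ioi]
      rcases lt_or_ge u a with h | h
      · rw [if_pos h, if_pos h, one_mul, min_eq_right h.le]
      · rw [if_neg (not_lt.mpr h), if_neg (not_lt.mpr h), zero_mul]
    rw [this, integral_indicator_const _ measurableSet_Ioi, measureReal_def, hIoi, smul_eq_mul, mul_comm]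
  constructor
  · have hpt : ∀ a, (χ a - M a) ^ 2 = χ a - 2 * M a + 2 * (ι a * M a) + M a ^ 2 := by
      intro a
      rw [hχdef, hιdef, hMdef]
      simp only []
      rcases le_or_gt a u with h | h
      · rw [if_pos h, if_neg (not_lt.mpr h)]; ring
      · rw [if_neg (not_le.mpr h), if_pos h, min_eq_right h.le]
        have : Λ' (min u u) = lam := by rw [min_self]
        ring
    have h2M : Integrable (fun a => 2 * M a) μ := hiM.const_mul 2
    have h2ιM : Integrable (fun a => 2 * (ι a * M a)) μ := hiιM.const_mul 2
    have h12 : Integrable (fun a => χ a - 2 * M a) μ := hiχ.sub h2M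
    have h123 : Integrable (fun a => χ a - 2 * M a + 2 * (ι a * M a)) μ := h12.add h2ιM
    calc ∫ a, (χ a - M a) ^ 2 ∂μ
        = ∫ a, (χ a - 2 * M a + 2 * (ι a * M a) + M a ^ 2) ∂μ := by
          exact integral_congr_ae (Eventually.of_forall fun a => hpt a)
      _ = (∫ a, (χ a - 2 * M a + 2 * (ι a * M a)) ∂μ) + ∫ a, M a ^ 2 ∂μ :=
          integral_add h123 hiM2
      _ = ((∫ a, (χ a - 2 * M a) ∂μ) + ∫ a, 2 * (ι a * M a) ∂μ) + ∫ a, M a ^ 2 ∂μ := by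
          rw [integral_add h12 h2ιM]
      _ = (((∫ a, χ a ∂μ) - ∫ a, 2 * M a ∂μ) + ∫ a, 2 * (ι a * M a) ∂μ) + ∫ a, M a ^ 2 ∂μ := by
          rw [integral_sub hiχ h2M]
      _ = ∫ a, M a ∂μ := by
          rw [integral_const_mul, integral_const_mul, hA, hB, hD, hE]
          ring
  · rw [integral_sub hiχ hiM, hA, hD]
    ring

end aux

lemma integrable_bdd' {α : Type*} [MeasurableSpace α] {μ : Measure α} [IsFiniteMeasure μ]
    {f : α → ℝ} (hf : Measurable f) (Mb : ℝ) (h : ∀ a, |f a| ≤ Mb) :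
    Integrable f μ :=
  (integrable_const Mb).mono hf.aestronglyMeasurable
    (Eventually.of_forall fun a => by
      simpa [Real.norm_eq_abs] using (h a).trans (le_abs_self Mb))

/-- With `T`, `C`, `Λ`, `X = min T C` as in the survival setting, for every
`t ≥ 0` the compensated single-observation counting variable
`1(T ≤ min(t,C)) − Λ(min(t,X))` satisfies
`E[(1(T ≤ min(t,C)) − Λ(min(t,X)))²] = E[Λ(min(t,X))]`; in particular it has mean `0`
and variance `E[Λ(min(t,X))]`. -/
theorem stmt11 {Ω : Type*} [MeasurableSpace Ω] (P : Measure Ω) [IsProbabilityMeasure P]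
    (T C : Ω → ℝ) (hT : Measurable T) (hC : Measurable C)
    (hTnonneg : ∀ ω, 0 ≤ T ω) (hCnonneg : ∀ ω, 0 ≤ C ω)
    (hTC : IndepFun T C P)
    (Λ : ℝ → ℝ) (hΛcont : ContinuousOn Λ (Ici 0)) (hΛmono : MonotoneOn Λ (Ici 0))
    (hΛ0 : Λ 0 = 0) (hΛnonneg : ∀ s ∈ Ici (0 : ℝ), 0 ≤ Λ s)
    (hsurv : ∀ s ∈ Ici (0 : ℝ), P {ω | s < T ω} = ENNReal.ofReal (Real.exp (-Λ s))) :
    ∀ t ≥ (0 : ℝ),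
      (∫ ω, ((if T ω ≤ min t (C ω) then (1 : ℝ) else 0)
          - Λ (min t (min (T ω) (C ω)))) ^ 2 ∂P
        = ∫ ω, Λ (min t (min (T ω) (C ω))) ∂P)
      ∧ ∫ ω, ((if T ω ≤ min t (C ω) then (1 : ℝ) else 0)
          - Λ (min t (min (T ω) (C ω)))) ∂P = 0 := by
  intro t ht
  set Λ' : ℝ → ℝ := fun s => Λ (max s 0) with hΛ'def
  have hc : Continuous Λ' :=
    hΛcont.comp_continuous (continuous_id.max continuous_const)
      (fun x => mem_Ici.mpr (le_max_right x 0))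
  have hmono' : Monotone Λ' := fun a b hab =>
    hΛmono (mem_Ici.mpr (le_max_right a 0)) (mem_Ici.mpr (le_max_right b 0))
      (max_le_max hab le_rfl)
  have h0' : ∀ s, s ≤ 0 → Λ' s = 0 := fun s hs0 => by
    rw [hΛ'def]; dsimp only; rw [max_eq_right hs0, hΛ0]
  have hΛ'eq : ∀ s, 0 ≤ s → Λ' s = Λ s := fun s hs0 => by
    rw [hΛ'def]; dsimp only; rw [max_eq_left hs0]
  set μT := P.map T with hμT
  set μC := P.map C with hμC
  haveI : IsProbabilityMeasure μT := Measure.isProbabilityMeasure_map hT.aemeasurable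
  haveI : IsProbabilityMeasure μC := Measure.isProbabilityMeasure_map hC.aemeasurable
  have hsurvT : ∀ s, 0 ≤ s → μT (Ioi s) = ENNReal.ofReal (Real.exp (-Λ' s)) := by
    intro s hs0
    rw [hμT, Measure.map_apply hT measurableSet_Ioi]
    have : T ⁻¹' Ioi s = {ω | s < T ω} := rfl
    rw [this, hsurv s (mem_Ici.mpr hs0), hΛ'eq s hs0]
  have hCae : ∀ᵐ b ∂μC, 0 ≤ b := by
    rw [ae_iff]
    have : {b : ℝ | ¬ 0 ≤ b} = Iio 0 := by ext b; simp only [mem_setOf_eq, mem_Iio, not_le]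
    rw [this, hμC, Measure.map_apply hC measurableSet_Iio]
    have : C ⁻¹' Iio 0 = ∅ := by
      ext ω; simp [not_lt.mpr (hCnonneg ω)]
    rw [this, measure_empty]
  -- functions on the product space
  set F : ℝ × ℝ → ℝ :=
    fun p => (if p.1 ≤ min t p.2 then (1:ℝ) else 0) - Λ' (min p.1 (min t p.2)) with hF
  set G : ℝ × ℝ → ℝ := fun p => Λ' (min p.1 (min t p.2)) with hG
  have hGm : Measurable G :=
    hc.measurable.comp (measurable_fst.min (measurable_const.min measurable_snd))
  have hFm : Measurable F :=
    (Measurable.ite (measurableSet_le measurable_fst (measurable_const.min measurable_snd))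
      measurable_const measurable_const).sub hGm
  have hGbd : ∀ p : ℝ × ℝ, |G p| ≤ Λ' t := by
    intro p
    rw [hG]; dsimp only
    rw [abs_of_nonneg (hΛnonneg _ (mem_Ici.mpr (le_max_right _ 0)))]
    exact hmono' ((min_le_right _ _).trans (min_le_left _ _))
  have hFbd : ∀ p : ℝ × ℝ, |F p| ≤ 1 + Λ' t := by
    intro p
    rw [hF]; dsimp only
    refine (abs_sub _ _).trans ?_
    gcongr
    · split <;> simp
    · exact (hGbd p)
  have hF2bd : ∀ p : ℝ × ℝ, |F p ^ 2| ≤ (1 + Λ' t) ^ 2 := by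
    intro p
    rw [abs_pow]
    exact pow_le_pow_left₀ (abs_nonneg _) (hFbd p) 2
  have hiF2 : Integrable (fun p => F p ^ 2) (μT.prod μC) :=
    integrable_bdd' (hFm.pow_const 2) _ hF2bd
  have hiF : Integrable F (μT.prod μC) := integrable_bdd' hFm _ hFbd
  have hiG : Integrable G (μT.prod μC) := integrable_bdd' hGm _ hGbd
  have hmap : P.map (fun ω => (T ω, C ω)) = μT.prod μC :=
    (indepFun_iff_map_prod_eq_prod_map_map hT.aemeasurable hC.aemeasurable).mp hTC
  have hpair : AEMeasurable (fun ω => (T ω, C ω)) P := (hT.prodMk hC).aemeasurable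
  -- pointwise identification
  have hptΛ : ∀ ω, Λ (min t (min (T ω) (C ω))) = Λ' (min (T ω) (min t (C ω))) := by
    intro ω
    rw [min_left_comm t (T ω) (C ω)]
    exact (hΛ'eq _ (le_min (hTnonneg ω) (le_min ht (hCnonneg ω)))).symm
  have hrwG : (fun ω => Λ (min t (min (T ω) (C ω)))) = fun ω => G (T ω, C ω) := by
    funext ω; rw [hG]; dsimp only; rw [hptΛ ω]
  have hrwF : (fun ω => (if T ω ≤ min t (C ω) then (1:ℝ) else 0)
      - Λ (min t (min (T ω) (C ω)))) = fun ω => F (T ω, C ω) := by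
    funext ω; rw [hF]; dsimp only; rw [hptΛ ω]
  -- transfer to product measure
  have hIG : ∫ ω, Λ (min t (min (T ω) (C ω))) ∂P = ∫ p, G p ∂(μT.prod μC) := by
    rw [hrwG, ← hmap, integral_map hpair hGm.aestronglyMeasurable]
  have hIF2 : ∫ ω, ((if T ω ≤ min t (C ω) then (1:ℝ) else 0)
      - Λ (min t (min (T ω) (C ω)))) ^ 2 ∂P = ∫ p, F p ^ 2 ∂(μT.prod μC) := by
    have : (fun ω => ((if T ω ≤ min t (C ω) then (1:ℝ) else 0)
        - Λ (min t (min (T ω) (C ω)))) ^ 2) = fun ω => F (T ω, C ω) ^ 2 := by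
      funext ω
      rw [congrFun hrwF ω]
    rw [this, ← hmap, integral_map hpair (hFm.pow_const 2).aestronglyMeasurable]
  have hIF : ∫ ω, ((if T ω ≤ min t (C ω) then (1:ℝ) else 0)
      - Λ (min t (min (T ω) (C ω)))) ∂P = ∫ p, F p ∂(μT.prod μC) := by
    rw [hrwF, ← hmap, integral_map hpair hFm.aestronglyMeasurable]
  -- Fubini and the one-dimensional result
  have hkey : ∀ b : ℝ, 0 ≤ b →
      ((∫ a, F (a, b) ^ 2 ∂μT = ∫ a, G (a, b) ∂μT) ∧ ∫ a, F (a, b) ∂μT = 0) := by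
    intro b hb
    have := key_int hc hmono' h0' hsurvT (le_min ht hb)
    simpa [hF, hG] using this
  constructor
  · rw [hIF2, hIG, integral_prod_symm _ hiF2, integral_prod_symm _ hiG]
    refine integral_congr_ae ?_
    filter_upwards [hCae] with b hb
    exact (hkey b hb).1
  · rw [hIF, integral_prod_symm _ hiF]
    have : ∀ᵐ b ∂μC, (∫ a, F (a, b) ∂μT) = 0 := by
      filter_upwards [hCae] with b hb
      exact (hkey b hb).2
    rw [integral_congr_ae this, integral_zero]
end
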